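/- arXiv:1901.03264 — 7 statements merged into one kernel-verified Lean document; each statement's English description precedes it below -/
import Mathlib

section
/- (Tijdeman's Number of Zeros Lemma) Let R > 0, t > 0 and s > 1, and let f be a complex-valued function that is analytic on an open set containing the closed disc {z ∈ ℂ : |z| ≤ (st+s+t)R} and is not identically zero there. Then the number of distinct zeros of f in the closed disc {|z| ≤ R} is at most (1/log s)·(log max_{|z| ≤ (st+s+t)R} |f(z)| − log max_{|z| ≤ tR} |f(z)|). -/
open Set

lemma aux_dslope_analytic {f : ℂ → ℂ} {U : Set ℂ} (hf : AnalyticOnNhd ℂ f U) {w : ℂ}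
    (hw : w ∈ U) : AnalyticOnNhd ℂ (dslope f w) U := by
  intro z hz
  rcases eq_or_ne z w with rfl | h
  · obtain ⟨p, hp⟩ := hf z hz
    exact hp.has_fpower_series_dslope_fslope.analyticAt
  · have h1 : AnalyticAt ℂ (fun u => (u - w)⁻¹ * (f u - f w)) z := by
      exact ((analyticAt_id.sub analyticAt_const).inv (sub_ne_zero.2 h)).mul
        ((hf z hz).sub analyticAt_const)
    apply h1.congr
    filter_upwards [isOpen_ne.mem_nhds h] with u hu
    rw [dslope_of_ne f hu, slope_def_field]
    field_simp

lemma aux_factor {f : ℂ → ℂ} {U : Set ℂ} (Z : Finset ℂ) (hf : AnalyticOnNhd ℂ f U)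
    (hZU : ∀ w ∈ Z, w ∈ U) (hZ0 : ∀ w ∈ Z, f w = 0) :
    ∃ g : ℂ → ℂ, AnalyticOnNhd ℂ g U ∧ ∀ z ∈ U, f z = g z * ∏ w ∈ Z, (z - w) := by
  induction Z using Finset.induction generalizing f with
  | empty => exact ⟨f, hf, by simp⟩
  | @insert a Z' ha ih =>
    have haU : a ∈ U := hZU a (Finset.mem_insert_self a Z')
    have hfa : f a = 0 := hZ0 a (Finset.mem_insert_self a Z')
    have hd : AnalyticOnNhd ℂ (dslope f a) U := aux_dslope_analytic hf haU
    obtain ⟨g, hg, hfac⟩ := ih hd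
      (fun w hw => hZU w (Finset.mem_insert_of_mem hw))
      (fun w hw => by
        have hwa : w ≠ a := fun h => ha (h ▸ hw)
        rw [dslope_of_ne f hwa, slope_def_field, hZ0 w (Finset.mem_insert_of_mem hw), hfa]
        simp)
    refine ⟨g, hg, fun z hz => ?_⟩
    have h1 : (z - a) • dslope f a z = f z - f a := sub_smul_dslope f a z
    rw [hfa, sub_zero, smul_eq_mul] at h1
    rw [← h1, hfac z hz, Finset.prod_insert ha]
    ring

/-- Tijdeman's Number of Zeros Lemma: if `f` is analytic on an open set
containing the closed disc of radius `(st+s+t)R` and not identically zero there, then the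
number of its distinct zeros in the closed disc of radius `R` is at most
`(1/log s) (log max_{|z| ≤ (st+s+t)R} |f(z)| − log max_{|z| ≤ tR} |f(z)|)`. -/
theorem stmt_2 (R s t : ℝ) (hR : 0 < R) (ht : 0 < t) (hs : 1 < s)
    (f : ℂ → ℂ) (U : Set ℂ) (hU : IsOpen U)
    (hsub : Metric.closedBall (0 : ℂ) ((s * t + s + t) * R) ⊆ U)
    (hf : AnalyticOnNhd ℂ f U)
    (hne : ∃ z ∈ Metric.closedBall (0 : ℂ) ((s * t + s + t) * R), f z ≠ 0) :
    {z ∈ Metric.closedBall (0 : ℂ) R | f z = 0}.Finite ∧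
    ({z ∈ Metric.closedBall (0 : ℂ) R | f z = 0}.ncard : ℝ) ≤
      (1 / Real.log s) *
        (Real.log (sSup ((fun z => ‖f z‖) ''
            Metric.closedBall (0 : ℂ) ((s * t + s + t) * R))) -
         Real.log (sSup ((fun z => ‖f z‖) ''
            Metric.closedBall (0 : ℂ) (t * R)))) := by
  set ρ : ℝ := (s * t + s + t) * R with hρ_def
  set r : ℝ := t * R with hr_def
  have hr0 : 0 < r := mul_pos ht hR
  have hρ0 : 0 < ρ := by nlinarith
  have hRρ : R < ρ := by nlinarith
  have hrρ : r < ρ := by nlinarith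
  have hRU : Metric.closedBall (0 : ℂ) R ⊆ U :=
    (Metric.closedBall_subset_closedBall hRρ.le).trans hsub
  have hballU : Metric.ball (0 : ℂ) ρ ⊆ U := Metric.ball_subset_closedBall.trans hsub
  -- f is not identically zero on the open ball of radius ρ
  have hnz : ¬ EqOn f 0 (Metric.ball (0 : ℂ) ρ) := by
    intro hEq
    obtain ⟨z₀, hz₀, hz₀ne⟩ := hne
    have hcont : ContinuousAt f z₀ := (hf z₀ (hsub hz₀)).continuousAt
    have hz₀cl : z₀ ∈ closure (Metric.ball (0 : ℂ) ρ) := by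
      rw [closure_ball (0 : ℂ) hρ0.ne']; exact hz₀
    have hnb : (nhdsWithin z₀ (Metric.ball (0 : ℂ) ρ)).NeBot :=
      mem_closure_iff_nhdsWithin_neBot.mp hz₀cl
    have h1 : Filter.Tendsto f (nhdsWithin z₀ (Metric.ball (0 : ℂ) ρ)) (nhds (f z₀)) :=
      hcont.continuousWithinAt
    have h2 : Filter.Tendsto (fun _ : ℂ => (0 : ℂ))
        (nhdsWithin z₀ (Metric.ball (0 : ℂ) ρ)) (nhds 0) := tendsto_const_nhds
    have : f z₀ = 0 := by
      refine tendsto_nhds_unique_of_eventuallyEq h1 h2 ?_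
      filter_upwards [eventually_mem_nhdsWithin] with u hu
      exact hEq hu
    exact hz₀ne this
  have key : ∀ z₀ ∈ Metric.ball (0 : ℂ) ρ, (∃ᶠ z in nhdsWithin z₀ {z₀}ᶜ, f z = 0) → False := by
    intro z₀ hz₀ hfreq
    exact hnz ((hf.mono hballU).eqOn_zero_of_preconnected_of_frequently_eq_zero
      (convex_ball (0 : ℂ) ρ).isPreconnected hz₀ hfreq)
  set Zs : Set ℂ := {z ∈ Metric.closedBall (0 : ℂ) R | f z = 0} with hZs_def
  -- finiteness
  have hfin : Zs.Finite := by
    by_contra h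
    obtain ⟨x, hxK, hacc⟩ := Set.Infinite.exists_accPt_of_subset_isCompact h
      (isCompact_closedBall (0 : ℂ) R) (sep_subset _ _)
    have hxball : x ∈ Metric.ball (0 : ℂ) ρ :=
      Metric.closedBall_subset_ball hRρ hxK
    apply key x hxball
    rw [accPt_iff_frequently] at hacc
    rw [frequently_nhdsWithin_iff]
    exact hacc.mono fun y hy => ⟨hy.2.2, hy.1⟩
  refine ⟨hfin, ?_⟩
  set Z : Finset ℂ := hfin.toFinset with hZ_def
  set n : ℕ := Z.card with hn_def
  have hmemZ : ∀ w, w ∈ Z ↔ w ∈ Zs := fun w => hfin.mem_toFinset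
  have hZU : ∀ w ∈ Z, w ∈ U := fun w hw => hRU ((hmemZ w).1 hw).1
  have hZ0 : ∀ w ∈ Z, f w = 0 := fun w hw => ((hmemZ w).1 hw).2
  have hZR : ∀ w ∈ Z, ‖w‖ ≤ R := fun w hw => by
    have := ((hmemZ w).1 hw).1
    rwa [Metric.mem_closedBall, dist_zero_right] at this
  obtain ⟨g, hg, hfac⟩ := aux_factor Z hf hZU hZ0
  -- maxima
  set A : ℂ → ℝ := fun z => ‖f z‖ with hA_def
  have hcontA : ContinuousOn A U := continuous_norm.comp_continuousOn hf.continuousOn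
  have hcρ : IsCompact (A '' Metric.closedBall (0 : ℂ) ρ) :=
    (isCompact_closedBall _ _).image_of_continuousOn
      (hcontA.mono hsub)
  have hcr : IsCompact (A '' Metric.closedBall (0 : ℂ) r) :=
    (isCompact_closedBall _ _).image_of_continuousOn
      (hcontA.mono ((Metric.closedBall_subset_closedBall hrρ.le).trans hsub))
  have hneρ : (A '' Metric.closedBall (0 : ℂ) ρ).Nonempty :=
    (Metric.nonempty_closedBall.mpr hρ0.le).image A
  have hner : (A '' Metric.closedBall (0 : ℂ) r).Nonempty :=
    (Metric.nonempty_closedBall.mpr hr0.le).image A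
  set Mρ : ℝ := sSup (A '' Metric.closedBall (0 : ℂ) ρ) with hMρ_def
  set Mr : ℝ := sSup (A '' Metric.closedBall (0 : ℂ) r) with hMr_def
  have hMρ_ub : ∀ z ∈ Metric.closedBall (0 : ℂ) ρ, A z ≤ Mρ := fun z hz =>
    le_csSup hcρ.bddAbove (mem_image_of_mem A hz)
  have hMr_ub : ∀ z ∈ Metric.closedBall (0 : ℂ) r, A z ≤ Mr := fun z hz =>
    le_csSup hcr.bddAbove (mem_image_of_mem A hz)
  obtain ⟨w₀, hw₀ball, hw₀⟩ : Mr ∈ A '' Metric.closedBall (0 : ℂ) r := hcr.sSup_mem hner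
  have hw₀r : ‖w₀‖ ≤ r := by
    rwa [Metric.mem_closedBall, dist_zero_right] at hw₀ball
  have hw₀U : w₀ ∈ U := hsub (Metric.closedBall_subset_closedBall hrρ.le hw₀ball)
  -- Mr > 0
  have hMr_pos : 0 < Mr := by
    rcases lt_or_ge 0 Mr with h | h
    · exact h
    · exfalso
      apply key 0 (Metric.mem_ball_self hρ0)
      have hz0 : ∀ z ∈ Metric.closedBall (0 : ℂ) r, f z = 0 := by
        intro z hz
        have h1 : A z ≤ 0 := (hMr_ub z hz).trans h
        have h2 : 0 ≤ A z := norm_nonneg _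
        have : ‖f z‖ = 0 := le_antisymm h1 h2
        exact norm_eq_zero.mp this
      have hev : ∀ᶠ z in nhds (0 : ℂ), f z = 0 := by
        filter_upwards [Metric.closedBall_mem_nhds (0 : ℂ) hr0] with z hz
        exact hz0 z hz
      exact (hev.filter_mono nhdsWithin_le_nhds).frequently
  -- the auxiliary function with Blaschke-type factors
  set G : ℂ → ℂ := fun z => g z * ∏ w ∈ Z, (((ρ : ℂ)) ^ 2 - (starRingEnd ℂ) w * z) / (ρ : ℂ)
    with hG_def
  have hρc : (ρ : ℂ) ≠ 0 := by exact_mod_cast hρ0.ne'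
  have hGanal : AnalyticOnNhd ℂ G U := by
    apply hg.mul
    intro z hz
    exact Finset.analyticAt_fun_prod Z fun w _ =>
      (analyticAt_const.sub (analyticAt_const.mul analyticAt_id)).div analyticAt_const hρc
  -- on the circle |z| = ρ, |G z| = |f z|
  have habs_sphere : ∀ z ∈ Metric.sphere (0 : ℂ) ρ, ‖G z‖ = ‖f z‖ := by
    intro z hz
    have hzρ : ‖z‖ = ρ := by
      rwa [Metric.mem_sphere, dist_zero_right] at hz
    have hzU : z ∈ U := hsub (Metric.sphere_subset_closedBall hz)
    have hzz : z * (starRingEnd ℂ) z = ((ρ : ℂ)) ^ 2 := by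
      rw [Complex.mul_conj]
      rw [Complex.normSq_eq_norm_sq, hzρ]
      push_cast
      ring
    have hfactor : ∀ w ∈ Z, ((ρ : ℂ)) ^ 2 - (starRingEnd ℂ) w * z
        = z * (starRingEnd ℂ) (z - w) := by
      intro w _
      rw [map_sub, mul_sub, hzz]
      ring
    rw [hfac z hzU, hG_def]
    simp only [norm_mul, norm_prod, norm_div]
    congr 1
    apply Finset.prod_congr rfl
    intro w hw
    rw [hfactor w hw, norm_mul, Complex.norm_conj, hzρ, Complex.norm_real, Real.norm_eq_abs,
      abs_of_pos hρ0]
    rw [mul_comm, mul_div_assoc, div_self hρ0.ne', mul_one]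
  -- maximum modulus principle
  have hGdiff : DiffContOnCl ℂ G (Metric.ball (0 : ℂ) ρ) := by
    constructor
    · exact (hGanal.mono hballU).differentiableOn
    · apply hGanal.continuousOn.mono
      rw [closure_ball (0 : ℂ) hρ0.ne']
      exact hsub
  have hGw₀_le : ‖G w₀‖ ≤ Mρ := by
    apply Complex.norm_le_of_forall_mem_frontier_norm_le Metric.isBounded_ball hGdiff
    · intro z hz
      rw [frontier_ball (0 : ℂ) hρ0.ne'] at hz
      rw [habs_sphere z hz]
      exact hMρ_ub z (Metric.sphere_subset_closedBall hz)
    · rw [closure_ball (0 : ℂ) hρ0.ne']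
      exact Metric.closedBall_subset_closedBall hrρ.le hw₀ball
  -- lower bound for each factor at w₀
  have hkey : ρ ^ 2 - R * r ≥ s * (t + 1) * R * ρ := by
    rw [hρ_def, hr_def]; nlinarith
  have hstR : 0 < s * (t + 1) * R := by positivity
  have hfactor_lb : ∀ w ∈ Z,
      s * (t + 1) * R ≤ ‖(((ρ : ℂ)) ^ 2 - (starRingEnd ℂ) w * w₀) / (ρ : ℂ)‖ := by
    intro w hw
    rw [norm_div, Complex.norm_real, Real.norm_eq_abs, abs_of_pos hρ0, le_div_iff₀ hρ0]
    have h1 : ‖((ρ : ℂ)) ^ 2‖ - ‖(starRingEnd ℂ) w * w₀‖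
        ≤ ‖((ρ : ℂ)) ^ 2 - (starRingEnd ℂ) w * w₀‖ :=
      norm_sub_norm_le _ _
    have h2 : ‖((ρ : ℂ)) ^ 2‖ = ρ ^ 2 := by
      rw [norm_pow, Complex.norm_real, Real.norm_eq_abs, abs_of_pos hρ0]
    have h3 : ‖(starRingEnd ℂ) w * w₀‖ ≤ R * r := by
      rw [norm_mul, Complex.norm_conj]
      exact mul_le_mul (hZR w hw) hw₀r (norm_nonneg _) hR.le
    nlinarith [norm_nonneg (((ρ : ℂ)) ^ 2 - (starRingEnd ℂ) w * w₀)]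
  -- lower bound for |G w₀|
  have hgw₀ := hfac w₀ hw₀U
  have hGw₀_ge : ‖g w₀‖ * (s * (t + 1) * R) ^ n ≤ ‖G w₀‖ := by
    rw [hG_def]
    simp only [norm_mul, norm_prod]
    apply mul_le_mul_of_nonneg_left _ (norm_nonneg _)
    calc (s * (t + 1) * R) ^ n = ∏ _w ∈ Z, (s * (t + 1) * R) := by
          rw [Finset.prod_const, hn_def]
      _ ≤ ∏ w ∈ Z, ‖(((ρ : ℂ)) ^ 2 - (starRingEnd ℂ) w * w₀) / (ρ : ℂ)‖ :=
          Finset.prod_le_prod (fun w _ => hstR.le) hfactor_lb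
  -- upper bound for Mr
  have hMr_le : Mr ≤ ‖g w₀‖ * ((t + 1) * R) ^ n := by
    rw [← hw₀, hA_def]
    simp only
    rw [hgw₀, norm_mul, norm_prod]
    apply mul_le_mul_of_nonneg_left _ (norm_nonneg _)
    calc ∏ w ∈ Z, ‖w₀ - w‖
        ≤ ∏ _w ∈ Z, ((t + 1) * R) := by
          apply Finset.prod_le_prod (fun w _ => norm_nonneg _)
          intro w hw
          calc ‖w₀ - w‖ ≤ ‖w₀‖ + ‖w‖ := norm_sub_le _ _
            _ ≤ r + R := add_le_add hw₀r (hZR w hw)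
            _ = (t + 1) * R := by rw [hr_def]; ring
      _ = ((t + 1) * R) ^ n := by rw [Finset.prod_const, hn_def]
  -- combine
  have hMρ_pos : 0 < Mρ := by
    have : Mr ≤ Mρ := by
      rw [← hw₀]
      exact hMρ_ub w₀ (Metric.closedBall_subset_closedBall hrρ.le hw₀ball)
    linarith
  have hmain : Mr * s ^ n ≤ Mρ := by
    have h1 : Mr * s ^ n ≤ ‖g w₀‖ * ((t + 1) * R) ^ n * s ^ n :=
      mul_le_mul_of_nonneg_right hMr_le (pow_nonneg (by linarith) n)
    have h2 : ‖g w₀‖ * ((t + 1) * R) ^ n * s ^ n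
        = ‖g w₀‖ * (s * (t + 1) * R) ^ n := by
      rw [mul_assoc, ← mul_pow]
      congr 2
      ring
    calc Mr * s ^ n ≤ ‖g w₀‖ * (s * (t + 1) * R) ^ n := by rw [← h2]; exact h1
      _ ≤ ‖G w₀‖ := hGw₀_ge
      _ ≤ Mρ := hGw₀_le
  -- logarithms
  have hlogs : 0 < Real.log s := Real.log_pos hs
  have hspow : (0 : ℝ) < s ^ n := pow_pos (by linarith) n
  have h1 : (s : ℝ) ^ n ≤ Mρ / Mr := by
    rw [le_div_iff₀ hMr_pos]
    linarith [hmain]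
  have h2 : (n : ℝ) * Real.log s ≤ Real.log Mρ - Real.log Mr := by
    have := Real.log_le_log hspow h1
    rwa [Real.log_pow, Real.log_div hMρ_pos.ne' hMr_pos.ne'] at this
  have hncard : (Zs.ncard : ℝ) = (n : ℝ) := by
    rw [hn_def, Set.ncard_eq_toFinset_card Zs hfin]
  rw [hncard, one_div, inv_mul_eq_div, le_div_iff₀ hlogs]
  linarith [h2]
end

section
/- Let n ≥ 1, let u₁ < u₂ < ⋯ < u_n be distinct real numbers, let a₁, …, a_n be strictly positive reals, and let a₀ > 0. Then the function f(y) = Σ_{i=1}^n a_i exp(−(y − u_i)²/2) − a₀ has at most 2n real zeros, i.e., the cardinality of {y ∈ ℝ : f(y) = 0} is at most 2n. -/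
open Real Set Polynomial

lemma rolle_encard (f : ℝ → ℝ) (hf : Differentiable ℝ f) :
    {x : ℝ | f x = 0}.encard ≤ {x : ℝ | deriv f x = 0}.encard + 1 := by
  set S := {x : ℝ | f x = 0} with hS
  set T := {x : ℝ | deriv f x = 0} with hT
  by_cases hTfin : T.Finite
  · set m := hTfin.toFinset.card with hm
    have key : ∀ B : Finset ℝ, ↑B ⊆ S → B.card ≤ m + 1 := by
      intro B hB
      by_contra hcon
      push_neg at hcon
      obtain ⟨A, hAB, hA2⟩ := Finset.exists_subset_card_eq hcon
      have hAS : (↑A : Set ℝ) ⊆ S := (Finset.coe_subset.mpr hAB).trans hB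
      let e := A.orderIsoOfFin hA2
      have hz : ∀ i : Fin (m + 2), f (e i : ℝ) = 0 := fun i => hAS (e i).2
      have hroll : ∀ i : Fin (m + 1), ∃ c ∈ Ioo ((e i.castSucc : ℝ)) ((e i.succ : ℝ)),
          deriv f c = 0 := by
        intro i
        have hlt : (e i.castSucc : ℝ) < (e i.succ : ℝ) := by
          exact_mod_cast e.strictMono (Fin.castSucc_lt_succ (i := i))
        exact exists_deriv_eq_zero hlt (hf.continuous.continuousOn)
          ((hz i.castSucc).trans (hz i.succ).symm)
      choose c hc1 hc2 using hroll
      have hcmono : StrictMono c := by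
        intro i j hij
        have h1 : c i < (e i.succ : ℝ) := (hc1 i).2
        have h2 : (e j.castSucc : ℝ) < c j := (hc1 j).1
        have h3 : (e i.succ : ℝ) ≤ (e j.castSucc : ℝ) := by
          have : i.succ ≤ j.castSucc := by
            rw [Fin.le_def, Fin.val_succ, Fin.coe_castSucc]
            have := Fin.lt_def.mp hij
            omega
          exact_mod_cast e.monotone this
        linarith
      have hsub : Finset.image c Finset.univ ⊆ hTfin.toFinset := by
        intro x hx
        simp only [Finset.mem_image] at hx
        obtain ⟨i, -, rfl⟩ := hx
        simpa [hT] using hc2 i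
      have := Finset.card_le_card hsub
      rw [Finset.card_image_of_injective _ hcmono.injective, Finset.card_univ,
        Fintype.card_fin] at this
      omega
    have hSfin : S.Finite := by
      by_contra hSinf
      obtain ⟨t, htS, htfin, htcard⟩ :=
        Set.Infinite.exists_subset_ncard_eq (hSinf : S.Infinite) (m + 2)
      have h1 : ↑htfin.toFinset ⊆ S := by rwa [Set.Finite.coe_toFinset]
      have h2 := key htfin.toFinset h1
      rw [Set.ncard_eq_toFinset_card t htfin] at htcard
      omega
    rw [hSfin.encard_eq_coe_toFinset_card, hTfin.encard_eq_coe_toFinset_card]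
    have h2 := key hSfin.toFinset (by rw [Set.Finite.coe_toFinset])
    calc (hSfin.toFinset.card : ℕ∞) ≤ ((m + 1 : ℕ) : ℕ∞) := by exact_mod_cast h2
      _ = (m : ℕ∞) + 1 := by push_cast; rfl
  · rw [Set.Infinite.encard_eq (hTfin : T.Infinite)]
    simp

open Real Set Polynomial

lemma key_lemma : ∀ (k d : ℕ) (u c : Fin k → ℝ), Function.Injective u → (∀ i, c i ≠ 0) →
    ∀ p : Polynomial ℝ, p ≠ 0 → p.natDegree ≤ d →
    {y : ℝ | (∑ i, c i * Real.exp (u i * y)) + p.eval y * Real.exp (y ^ 2 / 2) = 0}.encard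
      ≤ ((2 * k + d : ℕ) : ℕ∞) := by
  intro k
  induction k with
  | zero =>
    intro d u c hu hc p hp hd
    have hset : {y : ℝ | (∑ i : Fin 0, c i * Real.exp (u i * y))
        + p.eval y * Real.exp (y ^ 2 / 2) = 0} = ↑p.roots.toFinset := by
      ext y
      simp [Real.exp_ne_zero, Polynomial.mem_roots, hp, IsRoot]
    rw [hset, Set.encard_coe_eq_coe_finsetCard]
    have h1 : p.roots.toFinset.card ≤ p.natDegree :=
      le_trans (Multiset.toFinset_card_le _) (p.card_roots' )
    exact_mod_cast le_trans h1 (by omega : p.natDegree ≤ 2 * 0 + d)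
  | succ k ih =>
    intro d u c hu hc p hp hd
    set μ := u 0 with hμ
    set g : ℝ → ℝ := fun y => (∑ i, c i * Real.exp ((u i - μ) * y))
        + p.eval y * Real.exp (y ^ 2 / 2 - μ * y) with hgdef
    -- zero sets agree
    have hzero : {y : ℝ | (∑ i, c i * Real.exp (u i * y)) + p.eval y * Real.exp (y ^ 2 / 2) = 0}
        = {y : ℝ | g y = 0} := by
      ext y
      have hfac : g y = ((∑ i, c i * Real.exp (u i * y)) + p.eval y * Real.exp (y ^ 2 / 2))
          * Real.exp (-(μ * y)) := by
        rw [hgdef]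
        simp only [add_mul, Finset.sum_mul]
        congr 1
        · apply Finset.sum_congr rfl
          intro i _
          rw [mul_assoc, ← Real.exp_add]
          ring_nf
        · rw [mul_assoc, ← Real.exp_add]
          ring_nf
      simp only [Set.mem_setOf_eq, hfac, mul_eq_zero, Real.exp_ne_zero, or_false]
    -- derivative of g
    set q : Polynomial ℝ := p.derivative + (X - C μ) * p with hqdef
    have hqe : ∀ y : ℝ, q.eval y = p.derivative.eval y + (y - μ) * p.eval y := by
      intro y; simp [hqdef]
    have hder : ∀ y : ℝ, HasDerivAt g
        ((∑ i, c i * ((u i - μ) * Real.exp ((u i - μ) * y)))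
          + q.eval y * Real.exp (y ^ 2 / 2 - μ * y)) y := by
      intro y
      have h1 : ∀ i : Fin (k + 1), HasDerivAt (fun y => c i * Real.exp ((u i - μ) * y))
          (c i * ((u i - μ) * Real.exp ((u i - μ) * y))) y := by
        intro i
        have := ((hasDerivAt_id y).const_mul (u i - μ)).exp
        simpa [mul_comm] using this.const_mul (c i)
      have hsum : HasDerivAt (fun y => ∑ i, c i * Real.exp ((u i - μ) * y))
          (∑ i, c i * ((u i - μ) * Real.exp ((u i - μ) * y))) y :=
        HasDerivAt.fun_sum fun i _ => h1 i
      have hpe : HasDerivAt (fun y : ℝ => y ^ 2 / 2 - μ * y) (y - μ) y := by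
        have h2 : HasDerivAt (fun y : ℝ => y ^ 2 / 2) y y := by
          simpa using (hasDerivAt_pow 2 y).div_const 2
        simpa using h2.fun_sub ((hasDerivAt_id y).const_mul μ)
      have hprod : HasDerivAt (fun y => p.eval y * Real.exp (y ^ 2 / 2 - μ * y))
          (p.derivative.eval y * Real.exp (y ^ 2 / 2 - μ * y)
            + p.eval y * (Real.exp (y ^ 2 / 2 - μ * y) * (y - μ))) y :=
        (p.hasDerivAt y).mul hpe.exp
      have := hsum.fun_add hprod
      refine this.congr_deriv ?_
      rw [hqe]
      ring
    have hgdiff : Differentiable ℝ g := fun y => (hder y).differentiableAt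
    have hderiv : ∀ y, deriv g y = (∑ i, c i * ((u i - μ) * Real.exp ((u i - μ) * y)))
        + q.eval y * Real.exp (y ^ 2 / 2 - μ * y) := fun y => (hder y).deriv
    -- zero set of deriv g = zero set of h
    have hderzero : {y : ℝ | deriv g y = 0} =
        {y : ℝ | (∑ i : Fin k, (c i.succ * (u i.succ - μ)) * Real.exp (u i.succ * y))
          + q.eval y * Real.exp (y ^ 2 / 2) = 0} := by
      ext y
      have hfac : (∑ i : Fin k, (c i.succ * (u i.succ - μ)) * Real.exp (u i.succ * y))
          + q.eval y * Real.exp (y ^ 2 / 2) = deriv g y * Real.exp (μ * y) := by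
        rw [hderiv, add_mul, Finset.sum_mul, Fin.sum_univ_succ]
        simp only [← hμ, sub_self, zero_mul, mul_zero, zero_add, Real.exp_zero]
        congr 1
        · apply Finset.sum_congr rfl
          intro i _
          have hE : Real.exp ((u i.succ - μ) * y) * Real.exp (μ * y)
              = Real.exp (u i.succ * y) := by
            rw [← Real.exp_add]; ring_nf
          linear_combination (-(c i.succ * (u i.succ - μ))) * hE
        · have hE : Real.exp (y ^ 2 / 2 - μ * y) * Real.exp (μ * y)
              = Real.exp (y ^ 2 / 2) := by
            rw [← Real.exp_add]; ring_nf
          linear_combination (-(q.eval y)) * hE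
      simp only [Set.mem_setOf_eq, hfac, mul_eq_zero, Real.exp_ne_zero, or_false]
    -- q is nonzero with natDegree ≤ d + 1
    have hdm : ((X - C μ) * p).degree = p.degree + 1 := by
      rw [Polynomial.degree_mul, Polynomial.degree_X_sub_C, add_comm]
    have hlt : p.derivative.degree < ((X - C μ) * p).degree := by
      rw [hdm]
      exact lt_of_lt_of_le (Polynomial.degree_derivative_lt hp)
        (le_add_of_nonneg_right zero_le_one)
    have hdq : q.degree = p.degree + 1 := by
      rw [hqdef, Polynomial.degree_add_eq_right_of_degree_lt hlt, hdm]
    have hq0 : q ≠ 0 := by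
      refine Polynomial.zero_le_degree_iff.mp ?_
      rw [hdq]
      exact add_nonneg (Polynomial.zero_le_degree_iff.mpr hp) zero_le_one
    have hqd : q.natDegree ≤ d + 1 := by
      rw [hqdef]
      refine le_trans (Polynomial.natDegree_add_le _ _) ?_
      have h1 : p.derivative.natDegree ≤ d :=
        le_trans (Polynomial.natDegree_derivative_le p) (by omega)
      have h2 : ((X - C μ) * p).natDegree ≤ 1 + d :=
        le_trans (Polynomial.natDegree_mul_le)
          (by rw [Polynomial.natDegree_X_sub_C]; omega)
      exact max_le (by omega) (by omega)
    -- apply IH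
    have hinj : Function.Injective (fun i : Fin k => u i.succ) :=
      fun i j hij => Fin.succ_injective _ (hu hij)
    have hcne : ∀ i : Fin k, c i.succ * (u i.succ - μ) ≠ 0 := by
      intro i
      refine mul_ne_zero (hc _) (sub_ne_zero.mpr fun h => ?_)
      exact (Fin.succ_ne_zero i) (hu h)
    have hih := ih (d + 1) (fun i => u i.succ) (fun i => c i.succ * (u i.succ - μ))
      hinj hcne q hq0 hqd
    rw [← hderzero] at hih
    have hrolle := rolle_encard g hgdiff
    rw [hzero]
    calc {y : ℝ | g y = 0}.encard ≤ {y : ℝ | deriv g y = 0}.encard + 1 := hrolle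
      _ ≤ ((2 * k + (d + 1) : ℕ) : ℕ∞) + 1 := by exact add_le_add_left hih 1
      _ = ((2 * (k + 1) + d : ℕ) : ℕ∞) := by
          rw [show 2 * (k + 1) + d = (2 * k + (d + 1)) + 1 by ring]
          push_cast
          rfl

/-- a positive mixture of `n` equal-variance Gaussian kernels with distinct
centers, shifted down by a positive constant, has at most `2n` real zeros. -/
theorem stmt_4 (n : ℕ) (hn : 1 ≤ n) (u a : Fin n → ℝ) (hu : StrictMono u)
    (ha : ∀ i, 0 < a i) (a0 : ℝ) (ha0 : 0 < a0) :
    {y : ℝ | (∑ i, a i * Real.exp (-(y - u i) ^ 2 / 2)) - a0 = 0}.encard ≤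
      (2 * n : ℕ∞) := by
  set c : Fin n → ℝ := fun i => a i * Real.exp (-(u i) ^ 2 / 2) with hcdef
  set p : Polynomial ℝ := C (-a0) with hpdef
  have hset : {y : ℝ | (∑ i, a i * Real.exp (-(y - u i) ^ 2 / 2)) - a0 = 0}
      = {y : ℝ | (∑ i, c i * Real.exp (u i * y)) + p.eval y * Real.exp (y ^ 2 / 2) = 0} := by
    ext y
    have hfac : (∑ i, c i * Real.exp (u i * y)) + p.eval y * Real.exp (y ^ 2 / 2)
        = ((∑ i, a i * Real.exp (-(y - u i) ^ 2 / 2)) - a0) * Real.exp (y ^ 2 / 2) := by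
      rw [hpdef, Polynomial.eval_C, sub_mul, Finset.sum_mul]
      congr 1
      · apply Finset.sum_congr rfl
        intro i _
        have hE : Real.exp (-(u i) ^ 2 / 2) * Real.exp (u i * y)
            = Real.exp (-(y - u i) ^ 2 / 2) * Real.exp (y ^ 2 / 2) := by
          rw [← Real.exp_add, ← Real.exp_add]; ring_nf
        linear_combination a i * hE
      · ring
    simp only [Set.mem_setOf_eq, hfac, mul_eq_zero, Real.exp_ne_zero, or_false]
  rw [hset]
  have hp0 : p ≠ 0 := by
    rw [hpdef]
    simpa using ha0.ne'
  have hpd : p.natDegree ≤ 0 := by simp [hpdef]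
  have hc0 : ∀ i, c i ≠ 0 := fun i => mul_ne_zero (ha i).ne' (Real.exp_ne_zero _)
  have := key_lemma n 0 u c hu.injective hc0 p hp0 hpd
  calc {y : ℝ | (∑ i, c i * Real.exp (u i * y)) + p.eval y * Real.exp (y ^ 2 / 2) = 0}.encard
      ≤ ((2 * n + 0 : ℕ) : ℕ∞) := this
    _ = (2 * n : ℕ∞) := by push_cast; ring
end

section
/- Let X be a real random variable with E[X] = 0 and |X| ≤ A almost surely, where 0 < A, and define F(z) = (1/√(2π)) E[(X − z) exp(−(z − X)²/2)] for z ∈ ℂ. Then |F(A)| ≥ (A/√(2π)) exp(−2A²); consequently, for every B ≥ A, the maximum of |F(z)| over the closed disc {|z| ≤ B} is at least (A/√(2π)) exp(−2A²). -/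
open MeasureTheory Real

/-- for a zero-mean `X` with `|X| ≤ A` a.s. (`A > 0`), the entire extension
`F(z) = (1/√(2π)) E[(X − z) exp(−(z−X)²/2)]` satisfies `|F(A)| ≥ (A/√(2π)) exp(−2A²)`;
consequently, for every `B ≥ A`, the maximum of `|F|` over the closed disc `|z| ≤ B` is at
least `(A/√(2π)) exp(−2A²)`. -/
theorem stmt_6 {Ω : Type*} [MeasurableSpace Ω] (μ : Measure Ω) [IsProbabilityMeasure μ]
    (X : Ω → ℝ) (hXmeas : Measurable X) (A : ℝ) (hA : 0 < A)
    (hmean : ∫ ω, X ω ∂μ = 0)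
    (hbd : ∀ᵐ ω ∂μ, |X ω| ≤ A)
    (F : ℂ → ℂ)
    (hF : ∀ z : ℂ, F z = (1 / (Real.sqrt (2 * π)) : ℝ) *
      ∫ ω, ((X ω : ℂ) - z) * Complex.exp (-(z - (X ω : ℂ)) ^ 2 / 2) ∂μ) :
    (A / Real.sqrt (2 * π)) * Real.exp (-(2 * A ^ 2)) ≤ ‖F (A : ℂ)‖ ∧
    ∀ B : ℝ, A ≤ B →
      (A / Real.sqrt (2 * π)) * Real.exp (-(2 * A ^ 2)) ≤
        sSup ((fun z => ‖F z‖) '' Metric.closedBall (0 : ℂ) B) := by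
  have hπ : 0 < Real.sqrt (2 * π) := Real.sqrt_pos.2 (by positivity)
  set c : ℝ := 1 / Real.sqrt (2 * π) with hc
  have hc0 : 0 < c := by positivity
  set g : Ω → ℝ := fun ω => (A - X ω) * Real.exp (-(A - X ω) ^ 2 / 2) with hgdef
  have hXnorm : ∀ᵐ ω ∂μ, ‖X ω‖ ≤ A := hbd.mono fun ω h => by simpa using h
  have hXint : Integrable X μ :=
    (integrable_const A).mono' hXmeas.aestronglyMeasurable hXnorm
  have hgmeas : Measurable g := by
    apply (measurable_const.sub hXmeas).mul
    exact Real.measurable_exp.comp (by measurability)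
  have hgint : Integrable g μ := by
    apply (integrable_const (2 * A)).mono' hgmeas.aestronglyMeasurable
    filter_upwards [hbd] with ω h
    rw [abs_le] at h
    have h1 : |A - X ω| ≤ 2 * A := by rw [abs_le]; constructor <;> linarith
    calc ‖g ω‖ = |A - X ω| * Real.exp (-(A - X ω) ^ 2 / 2) := by
          rw [hgdef]; rw [Real.norm_eq_abs, abs_mul, abs_of_pos (Real.exp_pos _)]
      _ ≤ 2 * A * 1 :=
          mul_le_mul h1 (Real.exp_le_one_iff.2 (by nlinarith [sq_nonneg (A - X ω)]))
            (Real.exp_pos _).le (by linarith [abs_nonneg (A - X ω)])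
      _ = 2 * A := mul_one _
  have hlow : ∀ᵐ ω ∂μ, (A - X ω) * Real.exp (-(2 * A ^ 2)) ≤ g ω := by
    filter_upwards [hbd] with ω h
    rw [abs_le] at h
    apply mul_le_mul_of_nonneg_left _ (by linarith)
    apply Real.exp_le_exp.2
    nlinarith
  have hint_lhs : Integrable (fun ω => (A - X ω) * Real.exp (-(2 * A ^ 2))) μ :=
    ((integrable_const A).sub hXint).mul_const _
  have hkey : A * Real.exp (-(2 * A ^ 2)) ≤ ∫ ω, g ω ∂μ := by
    have h := integral_mono_ae hint_lhs hgint hlow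
    rwa [integral_mul_const, integral_sub (integrable_const A) hXint, hmean, integral_const,
      probReal_univ, smul_eq_mul, one_mul, sub_zero] at h
  have hFA : F (A : ℂ) = ((-(∫ ω, g ω ∂μ) * c : ℝ) : ℂ) := by
    rw [hF]
    have hpt : ∀ ω, ((X ω : ℂ) - (A : ℂ)) * Complex.exp (-((A : ℂ) - (X ω : ℂ)) ^ 2 / 2)
        = ((-(g ω) : ℝ) : ℂ) := by
      intro ω
      rw [hgdef]
      push_cast
      ring
    simp_rw [hpt]
    have hio : ∫ ω, ((-(g ω) : ℝ) : ℂ) ∂μ = ((∫ ω, -(g ω) ∂μ : ℝ) : ℂ) := integral_ofReal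
    rw [hio, integral_neg]
    push_cast
    ring
  have h1 : (A / Real.sqrt (2 * π)) * Real.exp (-(2 * A ^ 2)) ≤ ‖F (A : ℂ)‖ := by
    rw [hFA, Complex.norm_real, Real.norm_eq_abs, abs_mul, abs_neg, abs_of_pos hc0]
    have hle : A * Real.exp (-(2 * A ^ 2)) ≤ |∫ ω, g ω ∂μ| := le_trans hkey (le_abs_self _)
    calc A / Real.sqrt (2 * π) * Real.exp (-(2 * A ^ 2))
        = (A * Real.exp (-(2 * A ^ 2))) * c := by rw [hc]; ring
      _ ≤ |∫ ω, g ω ∂μ| * c := mul_le_mul_of_nonneg_right hle hc0.le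
  refine ⟨h1, fun B hB => ?_⟩
  have hB0 : 0 ≤ B := le_trans hA.le hB
  have hAB : (0 : ℝ) ≤ A + B := by linarith
  set C : ℝ := c * ((A + B) * Real.exp ((A + B) ^ 2 / 2)) with hC
  have hbdd : ∀ z ∈ Metric.closedBall (0 : ℂ) B, ‖F z‖ ≤ C := by
    intro z hz
    rw [Metric.mem_closedBall, dist_zero_right] at hz
    rw [hF]
    have hbound : ∀ᵐ ω ∂μ, ‖((X ω : ℂ) - z) * Complex.exp (-(z - (X ω : ℂ)) ^ 2 / 2)‖
        ≤ (A + B) * Real.exp ((A + B) ^ 2 / 2) := by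
      filter_upwards [hbd] with ω h
      rw [norm_mul]
      have habs : ‖(X ω : ℂ) - z‖ ≤ A + B := by
        calc ‖(X ω : ℂ) - z‖ ≤ ‖(X ω : ℂ)‖ + ‖z‖ := norm_sub_le _ _
          _ ≤ A + B := add_le_add (by simpa [Complex.norm_real] using h) hz
      have habs2 : ‖z - (X ω : ℂ)‖ ≤ A + B := by
        rw [norm_sub_rev]
        exact habs
      apply mul_le_mul habs _ (norm_nonneg _) hAB
      rw [Complex.norm_exp]
      apply Real.exp_le_exp.2
      calc (-(z - (X ω : ℂ)) ^ 2 / 2).re ≤ ‖-(z - (X ω : ℂ)) ^ 2 / 2‖ :=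
            Complex.re_le_norm _
        _ = (‖z - (X ω : ℂ)‖) ^ 2 / 2 := by
            rw [norm_div, norm_neg, norm_pow]
            simp
        _ ≤ (A + B) ^ 2 / 2 := by
            have := norm_nonneg (z - (X ω : ℂ))
            nlinarith
    have hni := norm_integral_le_of_norm_le_const hbound
    rw [probReal_univ, mul_one] at hni
    calc ‖(c : ℂ) * ∫ ω, ((X ω : ℂ) - z) * Complex.exp (-(z - (X ω : ℂ)) ^ 2 / 2) ∂μ‖
        = c * ‖∫ ω, ((X ω : ℂ) - z) * Complex.exp (-(z - (X ω : ℂ)) ^ 2 / 2) ∂μ‖ := by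
          rw [norm_mul, Complex.norm_real, Real.norm_eq_abs, abs_of_pos hc0]
      _ ≤ c * ((A + B) * Real.exp ((A + B) ^ 2 / 2)) := by
          exact mul_le_mul_of_nonneg_left hni hc0.le
      _ = C := rfl
  have hmem : ‖F (A : ℂ)‖ ∈ (fun z => ‖F z‖) '' Metric.closedBall (0 : ℂ) B := by
    refine ⟨(A : ℂ), ?_, rfl⟩
    rw [Metric.mem_closedBall, dist_zero_right]
    simpa [Complex.norm_real, abs_of_pos hA] using hB
  have hBdd : BddAbove ((fun z => ‖F z‖) '' Metric.closedBall (0 : ℂ) B) := by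
    refine ⟨C, ?_⟩
    rintro y ⟨z, hz, rfl⟩
    exact hbdd z hz
  exact le_trans h1 (le_csSup hBdd hmem)
end

section
/- Let X be a real random variable with E[X] = 0 and |X| ≤ A almost surely, where 0 < A < R, and let f_Y′(y) = (1/√(2π)) E[(X − y) exp(−(y − X)²/2)] be the derivative of the output density of the channel Y = X + Z with Z standard Gaussian independent of X. Then for every s > 1, the number of zeros of f_Y′ in the interval [−R, R] is at most ( ((A+R)s + A)²/2 + 2A² + log(2 + (A+R)s/A) ) / log s. -/
open MeasureTheory Real

/-! ### Auxiliary complex-analysis lemmas -/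

lemma factor_zeros {F : ℂ → ℂ} (hF : Differentiable ℂ F) (T : Finset ℂ)
    (hT : ∀ w ∈ T, F w = 0) :
    ∃ G : ℂ → ℂ, Differentiable ℂ G ∧ ∀ z, F z = G z * ∏ w ∈ T, (z - w) := by
  induction T using Finset.induction generalizing F with
  | empty => exact ⟨F, hF, by simp⟩
  | @insert a T ha ih =>
    have hFa : F a = 0 := hT a (Finset.mem_insert_self a T)
    have hd : Differentiable ℂ (dslope F a) := by
      rw [← differentiableOn_univ] at hF ⊢
      exact (Complex.differentiableOn_dslope (by simp)).mpr hF
    have hfac : ∀ z, F z = dslope F a z * (z - a) := by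
      intro z
      have := sub_smul_dslope F a z
      rw [smul_eq_mul, hFa, sub_zero] at this
      rw [← this]; ring
    have hzero : ∀ w ∈ T, dslope F a w = 0 := by
      intro w hw
      have hwa : w ≠ a := fun h => ha (h ▸ hw)
      have := hfac w
      rw [hT w (Finset.mem_insert_of_mem hw)] at this
      have hsub : (w - a) ≠ 0 := sub_ne_zero.mpr hwa
      field_simp at this
      exact (mul_eq_zero.mp this.symm).resolve_right hsub
    obtain ⟨G, hG, hGfac⟩ := ih hd hzero
    refine ⟨G, hG, fun z => ?_⟩
    rw [hfac z, hGfac z, Finset.prod_insert ha]; ring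

/-- Blaschke-product zero counting. -/
lemma blaschke_count {F : ℂ → ℂ} (hF : Differentiable ℂ F) {r ρ M : ℝ}
    (hr : 0 < r) (hρ : r < ρ)
    (hM : ∀ z : ℂ, ‖z‖ = ρ → ‖F z‖ ≤ M) (T : Finset ℂ)
    (hT : ∀ w ∈ T, ‖w‖ ≤ r ∧ F w = 0) :
    ‖F 0‖ * (ρ / r) ^ T.card ≤ M := by
  have hρ0 : (0:ℝ) < ρ := hr.trans hρ
  obtain ⟨G, hG, hGfac⟩ := factor_zeros hF T (fun w hw => (hT w hw).2)
  set φ : ℂ → ℂ := fun z => G z * ∏ w ∈ T, ((ρ^2 : ℂ) - (starRingEnd ℂ w) * z) / ρ with hφ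
  have hφd : Differentiable ℂ φ := by
    apply hG.mul
    apply Differentiable.fun_finset_prod
    intro w _
    exact ((differentiable_const _).sub ((differentiable_const _).mul differentiable_id)).div_const _
  have hsphere : ∀ z : ℂ, ‖z‖ = ρ → ‖φ z‖ = ‖F z‖ := by
    intro z hz
    have hzz : z * (starRingEnd ℂ z) = (ρ^2 : ℂ) := by
      rw [Complex.mul_conj]
      rw [← hz]
      push_cast
      simp [Complex.normSq_eq_norm_sq]
    have key : ∀ w : ℂ, (ρ^2 : ℂ) - (starRingEnd ℂ w) * z = z * (starRingEnd ℂ (z - w)) := by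
      intro w
      rw [map_sub, mul_sub, hzz]; ring
    have : ∀ w ∈ T, ‖((ρ^2 : ℂ) - (starRingEnd ℂ w) * z) / ρ‖ = ‖z - w‖ := by
      intro w _
      rw [key w, norm_div, norm_mul]
      simp only [hz, Complex.norm_conj]
      rw [Complex.norm_real, Real.norm_eq_abs, abs_of_pos hρ0]
      field_simp
    rw [hφ]
    simp only [norm_mul, norm_prod]
    rw [Finset.prod_congr rfl this, hGfac z, norm_mul, norm_prod]
  have hφ0 : ‖φ 0‖ ≤ M := by
    have hb : Bornology.IsBounded (Metric.ball (0:ℂ) ρ) := Metric.isBounded_ball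
    have hdc : DiffContOnCl ℂ φ (Metric.ball (0:ℂ) ρ) := hφd.diffContOnCl
    have hfr : ∀ z ∈ frontier (Metric.ball (0:ℂ) ρ), ‖φ z‖ ≤ M := by
      intro z hz
      rw [frontier_ball _ (ne_of_gt hρ0)] at hz
      have hz' : ‖z‖ = ρ := by simpa [Complex.dist_eq] using hz
      rw [hsphere z hz']
      exact hM z hz'
    exact Complex.norm_le_of_forall_mem_frontier_norm_le hb hdc hfr
      (by rw [closure_ball _ (ne_of_gt hρ0)]; simp [le_of_lt hρ0])
  have hφ0eq : ‖φ 0‖ = ‖G 0‖ * ρ ^ T.card := by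
    rw [hφ]
    simp only [mul_zero, sub_zero, norm_mul, norm_prod]
    congr 1
    rw [Finset.prod_congr rfl (g := fun _ => ρ) (fun w _ => ?_), Finset.prod_const]
    rw [norm_div]
    push_cast
    simp [abs_of_pos hρ0, sq_abs, sq, abs_of_pos hρ0]
  have hF0 : ‖F 0‖ ≤ ‖G 0‖ * r ^ T.card := by
    rw [hGfac 0, norm_mul, norm_prod]
    have hp : ∏ w ∈ T, ‖(0:ℂ) - w‖ ≤ r ^ T.card := by
      rw [← Finset.prod_const]
      exact Finset.prod_le_prod (fun w _ => norm_nonneg _)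
        (fun w hw => by simpa using (hT w hw).1)
    exact mul_le_mul_of_nonneg_left hp (norm_nonneg _)
  calc ‖F 0‖ * (ρ / r) ^ T.card ≤ (‖G 0‖ * r ^ T.card) * (ρ / r) ^ T.card :=
        mul_le_mul_of_nonneg_right hF0 (by positivity)
    _ = ‖G 0‖ * ρ ^ T.card := by
        rw [div_pow, mul_assoc, mul_div_assoc']
        rw [mul_comm (r ^ T.card), mul_div_assoc, div_self (by positivity), mul_one]
    _ = ‖φ 0‖ := hφ0eq.symm
    _ ≤ M := hφ0

/-! ### The complexified integrand -/

lemma re_neg_sq_div_two (w : ℂ) : (-(w^2)/2).re = (w.im^2 - w.re^2)/2 := by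
  have : -(w^2)/2 = ((-(1:ℝ)/2 : ℝ) : ℂ) * w^2 := by push_cast; ring
  rw [this, Complex.re_ofReal_mul, pow_two, Complex.mul_re]
  ring

lemma integrand_hasDerivAt (x : ℝ) (z : ℂ) :
    HasDerivAt (fun z : ℂ => ((x:ℂ) - z) * Complex.exp (-(z - x)^2/2))
      ((((x:ℂ) - z)^2 - 1) * Complex.exp (-(z - x)^2/2)) z := by
  have h1 : HasDerivAt (fun z : ℂ => -(z - (x:ℂ))^2/2) (-(z - x)) z := by
    have h : HasDerivAt (fun z : ℂ => z - (x:ℂ)) 1 z := (hasDerivAt_id z).sub_const _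
    have h2 := (h.fun_pow 2).neg.div_const 2
    refine h2.congr_deriv ?_
    ring
  have h2 := h1.cexp
  have h3 : HasDerivAt (fun z : ℂ => (x:ℂ) - z) (-1) z := (hasDerivAt_id z).const_sub _
  have h4 := h3.fun_mul h2
  refine h4.congr_deriv ?_
  ring

lemma exp_re_le (x : ℝ) (z : ℂ) :
    ‖Complex.exp (-(z - x)^2/2)‖ ≤ Real.exp (z.im^2/2) := by
  rw [Complex.norm_exp]
  apply Real.exp_le_exp.mpr
  rw [re_neg_sq_div_two]
  have him : (z - (x:ℂ)).im = z.im := by simp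
  rw [him]
  nlinarith [sq_nonneg ((z - (x:ℂ)).re)]

lemma integrand_norm_le (x : ℝ) (z : ℂ) :
    ‖((x:ℂ) - z) * Complex.exp (-(z - x)^2/2)‖ ≤
      ‖(x:ℂ) - z‖ * Real.exp (z.im^2/2) := by
  rw [norm_mul]
  exact mul_le_mul_of_nonneg_left (exp_re_le x z) (norm_nonneg _)

lemma deriv_norm_le (x : ℝ) (z : ℂ) :
    ‖(((x:ℂ) - z)^2 - 1) * Complex.exp (-(z - x)^2/2)‖ ≤
      (‖(x:ℂ) - z‖^2 + 1) * Real.exp (z.im^2/2) := by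
  rw [norm_mul]
  have h1 : ‖((x:ℂ) - z)^2 - 1‖ ≤ ‖(x:ℂ) - z‖^2 + 1 := by
    calc ‖((x:ℂ) - z)^2 - 1‖ ≤ ‖((x:ℂ) - z)^2‖ + ‖(1:ℂ)‖ := norm_sub_le _ _
      _ = ‖(x:ℂ) - z‖^2 + 1 := by rw [norm_pow, norm_one]
  exact mul_le_mul h1 (exp_re_le x z) (norm_nonneg _) (by positivity)

lemma F_differentiable {Ω : Type*} [MeasurableSpace Ω] (μ : Measure Ω) [IsProbabilityMeasure μ]
    (X : Ω → ℝ) (hXmeas : Measurable X) (A : ℝ) (hbd : ∀ᵐ ω ∂μ, |X ω| ≤ A) :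
    Differentiable ℂ (fun z => ∫ ω, ((X ω : ℂ) - z) * Complex.exp (-(z - X ω)^2/2) ∂μ) := by
  intro z₀
  have hcont : ∀ z : ℂ, AEStronglyMeasurable
      (fun ω => ((X ω : ℂ) - z) * Complex.exp (-(z - X ω)^2/2)) μ := by
    intro z
    have hc : Continuous (fun x : ℝ => ((x:ℂ) - z) * Complex.exp (-(z - x)^2/2)) := by
      fun_prop
    exact (hc.measurable.comp hXmeas).aestronglyMeasurable
  have hF'meas : AEStronglyMeasurable
      (fun ω => (((X ω : ℂ) - z₀)^2 - 1) * Complex.exp (-(z₀ - X ω)^2/2)) μ := by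
    have hc : Continuous (fun x : ℝ => (((x:ℂ) - z₀)^2 - 1) * Complex.exp (-(z₀ - x)^2/2)) := by
      fun_prop
    exact (hc.measurable.comp hXmeas).aestronglyMeasurable
  set C : ℝ := ((|A| + ‖z₀‖ + 1)^2 + 1) * Real.exp ((‖z₀‖ + 1)^2/2) with hC
  have key : ∀ ω : Ω, |X ω| ≤ A → ∀ z : ℂ, ‖z - z₀‖ < 1 →
      ‖(((X ω : ℂ) - z)^2 - 1) * Complex.exp (-(z - X ω)^2/2)‖ ≤ C := by
    intro ω hω z hz
    have hzle : ‖z‖ ≤ ‖z₀‖ + 1 := by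
      calc ‖z‖ = ‖z - z₀ + z₀‖ := by ring_nf
        _ ≤ ‖z - z₀‖ + ‖z₀‖ := norm_add_le _ _
        _ ≤ ‖z₀‖ + 1 := by linarith
    have h1 : ‖(X ω : ℂ) - z‖ ≤ |A| + ‖z₀‖ + 1 := by
      calc ‖(X ω : ℂ) - z‖ ≤ ‖(X ω : ℂ)‖ + ‖z‖ := norm_sub_le _ _
        _ ≤ |A| + (‖z₀‖ + 1) := by
            apply add_le_add _ hzle
            rw [Complex.norm_real, Real.norm_eq_abs]
            exact hω.trans (le_abs_self A)
        _ = |A| + ‖z₀‖ + 1 := by ring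
    have h2 : z.im^2 ≤ (‖z₀‖ + 1)^2 := by
      have h3 : |z.im| ≤ ‖z₀‖ + 1 := (Complex.abs_im_le_norm z).trans hzle
      calc z.im^2 = |z.im|^2 := (sq_abs _).symm
        _ ≤ (‖z₀‖ + 1)^2 := by
            apply pow_le_pow_left₀ (abs_nonneg _) h3
    calc ‖(((X ω : ℂ) - z)^2 - 1) * Complex.exp (-(z - X ω)^2/2)‖
        ≤ (‖(X ω : ℂ) - z‖^2 + 1) * Real.exp (z.im^2/2) := deriv_norm_le _ _
      _ ≤ C := by
          rw [hC]
          apply mul_le_mul _ (Real.exp_le_exp.mpr (by linarith)) (le_of_lt (Real.exp_pos _))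
            (by positivity)
          have := pow_le_pow_left₀ (norm_nonneg ((X ω : ℂ) - z)) h1 2
          linarith
  have h := hasDerivAt_integral_of_dominated_loc_of_deriv_le (F := fun z ω =>
      ((X ω : ℂ) - z) * Complex.exp (-(z - X ω)^2/2))
      (F' := fun z ω => (((X ω : ℂ) - z)^2 - 1) * Complex.exp (-(z - X ω)^2/2))
      (bound := fun _ => C) (x₀ := z₀) (Metric.ball_mem_nhds z₀ one_pos)
      (Filter.Eventually.of_forall hcont) ?_ hF'meas ?_ (integrable_const C) ?_
  · exact h.2.differentiableAt
  · apply (integrable_const ((|A| + ‖z₀‖) * Real.exp (z₀.im^2/2))).mono' (hcont z₀)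
    filter_upwards [hbd] with ω hω
    calc ‖((X ω : ℂ) - z₀) * Complex.exp (-(z₀ - X ω)^2/2)‖
        ≤ ‖(X ω : ℂ) - z₀‖ * Real.exp (z₀.im^2/2) := integrand_norm_le _ _
      _ ≤ (|A| + ‖z₀‖) * Real.exp (z₀.im^2/2) := by
          apply mul_le_mul_of_nonneg_right _ (le_of_lt (Real.exp_pos _))
          calc ‖(X ω : ℂ) - z₀‖ ≤ ‖(X ω : ℂ)‖ + ‖z₀‖ := norm_sub_le _ _
            _ ≤ |A| + ‖z₀‖ := by
                apply add_le_add_left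
                rw [Complex.norm_real, Real.norm_eq_abs]
                exact hω.trans (le_abs_self A)
  · filter_upwards [hbd] with ω hω z hz
    rw [Metric.mem_ball, dist_eq_norm] at hz
    exact key ω hω z hz
  · filter_upwards with ω z _
    exact integrand_hasDerivAt (X ω) z

/-! ### Main theorem -/

/-- for zero-mean `X` with `|X| ≤ A` a.s. and `0 < A < R`, the derivative
`f_Y′(y) = (1/√(2π)) E[(X − y) exp(−(y−X)²/2)]` of the output density has finitely many
zeros in `[−R, R]`, and for every `s > 1` their number is at most
`( ((A+R)s + A)²/2 + 2A² + log(2 + (A+R)s/A) ) / log s`. -/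
theorem stmt_7 {Ω : Type*} [MeasurableSpace Ω] (μ : Measure Ω) [IsProbabilityMeasure μ]
    (X : Ω → ℝ) (hXmeas : Measurable X) (A R : ℝ) (hA : 0 < A) (hAR : A < R)
    (hmean : ∫ ω, X ω ∂μ = 0)
    (hbd : ∀ᵐ ω ∂μ, |X ω| ≤ A)
    (fY' : ℝ → ℝ)
    (hfY' : ∀ y : ℝ, fY' y = (1 / Real.sqrt (2 * π)) *
      ∫ ω, (X ω - y) * Real.exp (-(y - X ω) ^ 2 / 2) ∂μ) :
    {y ∈ Set.Icc (-R) R | fY' y = 0}.Finite ∧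
    ∀ s : ℝ, 1 < s →
      ({y ∈ Set.Icc (-R) R | fY' y = 0}.ncard : ℝ) ≤
        (((A + R) * s + A) ^ 2 / 2 + 2 * A ^ 2 +
          Real.log (2 + (A + R) * s / A)) / Real.log s := by
  set S := {y ∈ Set.Icc (-R) R | fY' y = 0} with hS
  set g : ℝ → ℝ := fun y => ∫ ω, (X ω - y) * Real.exp (-(y - X ω) ^ 2 / 2) ∂μ with hg
  set F : ℂ → ℂ := fun z => ∫ ω, ((X ω : ℂ) - z) * Complex.exp (-(z - X ω)^2/2) ∂μ with hF
  have hFdiff : Differentiable ℂ F := F_differentiable μ X hXmeas A hbd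
  -- F agrees with g on the reals
  have hFreal : ∀ y : ℝ, F (y : ℂ) = ((g y : ℝ) : ℂ) := by
    intro y
    have hpt : ∀ ω : Ω, ((X ω : ℂ) - (y:ℂ)) * Complex.exp (-((y:ℂ) - X ω)^2/2) =
        (((X ω - y) * Real.exp (-(y - X ω) ^ 2 / 2) : ℝ) : ℂ) := by
      intro ω
      push_cast
      ring_nf
    rw [hF]
    simp only [hpt]
    exact integral_ofReal
  -- zeros of fY' are zeros of g
  have hgzero : ∀ y : ℝ, fY' y = 0 → g y = 0 := by
    intro y hy
    have h := hfY' y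
    rw [hy] at h
    have hsqrt : Real.sqrt (2 * π) ≠ 0 := by
      positivity
    have : (1 / Real.sqrt (2 * π)) ≠ 0 := by positivity
    field_simp at h
    rw [zero_mul] at h; simp only [hg, neg_div]; linarith
  -- X is integrable
  have hXint : Integrable X μ := by
    apply (integrable_const A).mono' hXmeas.aestronglyMeasurable
    filter_upwards [hbd] with ω hω
    rwa [Real.norm_eq_abs]
  -- the lower bound at -A
  set m : ℝ := A * Real.exp (-(2 * A^2)) with hm
  have hmpos : 0 < m := by positivity
  have hmlow : m ≤ g (-A) := by
    have heq : g (-A) = ∫ ω, (X ω + A) * Real.exp (-(X ω + A)^2/2) ∂μ := by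
      simp only [hg]
      congr 1
      funext ω
      have h1 : X ω - (-A) = X ω + A := by ring
      have h2 : (-(( -A) - X ω) ^ 2 / 2) = -(X ω + A)^2/2 := by ring
      rw [h1, h2]
    rw [heq]
    have hint1 : Integrable (fun ω => (X ω + A) * Real.exp (-(X ω + A)^2/2)) μ := by
      apply (integrable_const (2*A)).mono'
      · have hc : Continuous (fun x : ℝ => (x + A) * Real.exp (-(x + A)^2/2)) := by fun_prop
        exact (hc.measurable.comp hXmeas).aestronglyMeasurable
      · filter_upwards [hbd] with ω hω
        rw [Real.norm_eq_abs, abs_mul]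
        have h1 : |X ω + A| ≤ 2*A := by
          rw [abs_le] at hω ⊢
          constructor <;> nlinarith [hω.1, hω.2]
        have h2 : |Real.exp (-(X ω + A)^2/2)| ≤ 1 := by
          rw [abs_of_pos (Real.exp_pos _)]
          apply Real.exp_le_one_iff.mpr
          nlinarith [sq_nonneg (X ω + A)]
        calc |X ω + A| * |Real.exp (-(X ω + A)^2/2)| ≤ (2*A) * 1 :=
              mul_le_mul h1 h2 (abs_nonneg _) (by linarith)
          _ = 2*A := by ring
    have hint2 : Integrable (fun ω => Real.exp (-(2 * A^2)) * (X ω + A)) μ :=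
      ((hXint.add (integrable_const A)).const_mul _)
    have hmono : (fun ω => Real.exp (-(2 * A^2)) * (X ω + A)) ≤ᵐ[μ]
        (fun ω => (X ω + A) * Real.exp (-(X ω + A)^2/2)) := by
      filter_upwards [hbd] with ω hω
      rw [abs_le] at hω
      have hge : 0 ≤ X ω + A := by linarith [hω.1]
      have hexp : Real.exp (-(2 * A^2)) ≤ Real.exp (-(X ω + A)^2/2) := by
        apply Real.exp_le_exp.mpr
        nlinarith [hω.1, hω.2]
      calc Real.exp (-(2 * A^2)) * (X ω + A) ≤ Real.exp (-(X ω + A)^2/2) * (X ω + A) :=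
            mul_le_mul_of_nonneg_right hexp hge
        _ = (X ω + A) * Real.exp (-(X ω + A)^2/2) := by ring
    calc m = Real.exp (-(2 * A^2)) * (0 + A) := by rw [hm]; ring
      _ = Real.exp (-(2 * A^2)) * ((∫ ω, X ω ∂μ) + A) := by rw [hmean]
      _ = ∫ ω, Real.exp (-(2 * A^2)) * (X ω + A) ∂μ := by
          rw [integral_const_mul]
          congr 1
          rw [integral_add hXint (integrable_const A), integral_const]
          simp [measure_univ]
      _ ≤ ∫ ω, (X ω + A) * Real.exp (-(X ω + A)^2/2) ∂μ := integral_mono_ae hint2 hint1 hmono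
  -- upper bound on spheres centered at -A
  have hMup : ∀ (ρ : ℝ), 0 < ρ → ∀ z : ℂ, ‖z + (A:ℂ)‖ = ρ →
      ‖F z‖ ≤ (2*A + ρ) * Real.exp (ρ^2/2) := by
    intro ρ hρ z hz
    show ‖∫ ω, ((X ω : ℂ) - z) * Complex.exp (-(z - X ω)^2/2) ∂μ‖ ≤
      (2*A + ρ) * Real.exp (ρ^2/2)
    refine le_trans (norm_integral_le_of_norm_le
      (integrable_const ((2*A + ρ) * Real.exp (ρ^2/2))) ?_) (by simp)
    filter_upwards [hbd] with ω hω
    have hstep1 : ‖(X ω : ℂ) - z‖ ≤ 2*A + ρ := by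
      have he : ‖(X ω : ℂ) - z‖ = ‖((X ω + A : ℝ) : ℂ) - (z + (A:ℂ))‖ := by
        congr 1; push_cast; ring
      rw [he]
      have h1 : ‖((X ω + A : ℝ) : ℂ)‖ ≤ 2*A := by
        rw [Complex.norm_real, Real.norm_eq_abs]
        rw [abs_le] at hω
        rw [abs_le]
        constructor <;> nlinarith [hω.1, hω.2]
      have h2 : ‖z + (A:ℂ)‖ = ρ := by rw [hz]
      calc ‖((X ω + A : ℝ) : ℂ) - (z + (A:ℂ))‖
          ≤ ‖((X ω + A : ℝ) : ℂ)‖ + ‖z + (A:ℂ)‖ := norm_sub_le _ _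
        _ ≤ 2*A + ρ := by rw [h2]; linarith
    have hstep2 : Real.exp (z.im^2/2) ≤ Real.exp (ρ^2/2) := by
      apply Real.exp_le_exp.mpr
      have him : z.im = (z + (A:ℂ)).im := by simp
      have h3 : |z.im| ≤ ρ := by
        rw [him, ← hz]
        exact Complex.abs_im_le_norm _
      have h4 : z.im^2 ≤ ρ^2 := by
        calc z.im^2 = |z.im|^2 := (sq_abs _).symm
          _ ≤ ρ^2 := pow_le_pow_left₀ (abs_nonneg _) h3 2
      linarith
    calc ‖((X ω : ℂ) - z) * Complex.exp (-(z - X ω)^2/2)‖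
        ≤ ‖(X ω : ℂ) - z‖ * Real.exp (z.im^2/2) := integrand_norm_le _ _
      _ ≤ (2*A + ρ) * Real.exp (ρ^2/2) :=
          mul_le_mul hstep1 hstep2 (le_of_lt (Real.exp_pos _)) (by positivity)
  -- key counting estimate
  have key : ∀ s' : ℝ, 1 < s' → ∀ T₀ : Finset ℝ, (↑T₀ : Set ℝ) ⊆ S →
      m * s' ^ T₀.card ≤ (2*A + (A+R)*s') * Real.exp (((A+R)*s')^2/2) := by
    intro s' hs' T₀ hT₀
    set r : ℝ := A + R with hr
    set ρ : ℝ := (A + R) * s' with hρdef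
    have hr0 : 0 < r := by rw [hr]; linarith
    have hrρ : r < ρ := by
      rw [hr, hρdef]
      nlinarith
    have hρ0 : 0 < ρ := hr0.trans hrρ
    set Fc : ℂ → ℂ := fun z => F (z - (A:ℂ)) with hFc
    have hFcdiff : Differentiable ℂ Fc :=
      hFdiff.comp (differentiable_id.sub_const _)
    have hMc : ∀ z : ℂ, ‖z‖ = ρ → ‖Fc z‖ ≤ (2*A + ρ) * Real.exp (ρ^2/2) := by
      intro z hz
      show ‖F (z - (A:ℂ))‖ ≤ _
      apply hMup ρ hρ0
      rw [show z - (A:ℂ) + (A:ℂ) = z by ring, hz]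
    set T : Finset ℂ := T₀.image (fun y : ℝ => (y:ℂ) + (A:ℂ)) with hT
    have hinj : Function.Injective (fun y : ℝ => (y:ℂ) + (A:ℂ)) := by
      intro a b hab
      simp only [add_left_inj] at hab
      exact_mod_cast hab
    have hTcard : T.card = T₀.card := Finset.card_image_of_injective _ hinj
    have hTzero : ∀ w ∈ T, ‖w‖ ≤ r ∧ Fc w = 0 := by
      intro w hw
      rw [hT, Finset.mem_image] at hw
      obtain ⟨y, hy, rfl⟩ := hw
      have hyS : y ∈ S := hT₀ hy
      rw [hS] at hyS
      obtain ⟨hyI, hyz⟩ := hyS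
      constructor
      · have : ((y:ℂ) + A) = ((y + A : ℝ) : ℂ) := by push_cast; ring
        rw [this, Complex.norm_real, Real.norm_eq_abs, hr]
        rw [Set.mem_Icc] at hyI
        rw [abs_le]
        constructor <;> linarith [hyI.1, hyI.2]
      · show F ((y:ℂ) + (A:ℂ) - (A:ℂ)) = 0
        have : ((y:ℂ) + (A:ℂ) - (A:ℂ)) = (y:ℂ) := by ring
        rw [this, hFreal y, hgzero y hyz]
        simp
    have hbl := blaschke_count hFcdiff hr0 hrρ hMc T hTzero
    have hFc0 : m ≤ ‖Fc 0‖ := by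
      show m ≤ ‖F ((0:ℂ) - (A:ℂ))‖
      have : (0:ℂ) - (A:ℂ) = ((-A : ℝ) : ℂ) := by push_cast; ring
      rw [this, hFreal (-A)]
      rw [Complex.norm_real, Real.norm_eq_abs]
      exact hmlow.trans (le_abs_self _)
    have hρr : ρ / r = s' := by
      rw [hρdef, hr]
      field_simp [show A + R ≠ 0 by linarith]
    rw [hρr, hTcard] at hbl
    calc m * s' ^ T₀.card ≤ ‖Fc 0‖ * s' ^ T₀.card := by
          apply mul_le_mul_of_nonneg_right hFc0
          positivity
      _ ≤ (2*A + ρ) * Real.exp (ρ^2/2) := hbl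
  -- finiteness
  have hfin : S.Finite := by
    by_contra hinf
    replace hinf : S.Infinite := hinf
    set M2 : ℝ := (2*A + (A+R)*2) * Real.exp (((A+R)*2)^2/2) with hM2
    have hM2pos : 0 < M2 := by
      have hAR2 : (0:ℝ) < A + R := by linarith
      positivity
    set k : ℕ := ⌈M2 / m⌉₊ + 1 with hk
    obtain ⟨t, hts, htf, htcard⟩ := Set.Infinite.exists_subset_ncard_eq hinf k
    have hcoe : (↑htf.toFinset : Set ℝ) ⊆ S := by
      rw [Set.Finite.coe_toFinset]; exact hts
    have hcard : htf.toFinset.card = k := by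
      rw [← Set.ncard_eq_toFinset_card t htf, htcard]
    have h1 := key 2 one_lt_two htf.toFinset hcoe
    rw [hcard] at h1
    have h2 : (k : ℝ) < 2 ^ k := by exact_mod_cast Nat.lt_two_pow_self
    have h3 : m * k < M2 := by
      calc m * k < m * 2^k := by
            apply mul_lt_mul_of_pos_left h2 hmpos
        _ ≤ M2 := h1
    have h4 : M2 / m < k := by
      have hceil := Nat.le_ceil (M2 / m)
      rw [hk]
      push_cast
      linarith
    have h5 : M2 < m * k := by
      rw [div_lt_iff₀ hmpos] at h4
      linarith [h4]
    linarith
  refine ⟨hfin, ?_⟩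
  -- the quantitative bound
  intro s hs
  have hlogs : 0 < Real.log s := Real.log_pos hs
  set n : ℕ := S.ncard with hn
  have hcoe : (↑hfin.toFinset : Set ℝ) ⊆ S := by
    rw [Set.Finite.coe_toFinset]
  have hcard : hfin.toFinset.card = n := by
    rw [← Set.ncard_eq_toFinset_card S hfin]
  have h1 := key s hs hfin.toFinset hcoe
  rw [hcard] at h1
  set ρ : ℝ := (A + R) * s with hρdef
  have hρ0 : 0 < ρ := by
    rw [hρdef]; nlinarith
  have hM0 : 0 < (2*A + ρ) * Real.exp (ρ^2/2) := by positivity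
  have hlog := Real.log_le_log (by positivity) h1
  rw [Real.log_mul (ne_of_gt hmpos) (by positivity), Real.log_pow] at hlog
  rw [hm, Real.log_mul (ne_of_gt hA) (ne_of_gt (Real.exp_pos _)), Real.log_exp] at hlog
  rw [Real.log_mul (by positivity) (ne_of_gt (Real.exp_pos _)), Real.log_exp] at hlog
  -- hlog : log A + -(2A²) + n * log s ≤ log (2A + ρ) + ρ²/2
  have hlogdiff : Real.log (2*A + ρ) - Real.log A = Real.log (2 + (A+R)*s/A) := by
    rw [← Real.log_div (by positivity) (ne_of_gt hA)]
    congr 1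
    rw [hρdef]
    field_simp
  have hsq : ρ^2/2 ≤ ((A+R)*s + A)^2/2 := by
    rw [hρdef]
    nlinarith [hρ0]
  have hnum : (n : ℝ) * Real.log s ≤
      ((A + R) * s + A) ^ 2 / 2 + 2 * A ^ 2 + Real.log (2 + (A + R) * s / A) := by
    have : (n : ℝ) * Real.log s ≤ Real.log (2*A + ρ) + ρ^2/2 - Real.log A + 2*A^2 := by
      linarith
    calc (n : ℝ) * Real.log s ≤ Real.log (2*A + ρ) + ρ^2/2 - Real.log A + 2*A^2 := this
      _ = ρ^2/2 + 2*A^2 + (Real.log (2*A + ρ) - Real.log A) := by ring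
      _ = ρ^2/2 + 2*A^2 + Real.log (2 + (A+R)*s/A) := by rw [hlogdiff]
      _ ≤ ((A + R) * s + A) ^ 2 / 2 + 2 * A ^ 2 + Real.log (2 + (A + R) * s / A) := by
          linarith
  rw [le_div_iff₀ hlogs]
  exact hnum
end

section
/- Let n ≥ 2 be an integer and let R be a real random variable with 0 ≤ R ≤ A almost surely (A > 0). For x > 0 define g_n(x) = E[ exp(−(x + R²)/2) · (2^{1−n/2}/(√π Γ((n−1)/2))) ∫₀^π exp(R√x cos θ) sin^{n−2} θ dθ ]. Then g_n is differentiable on (0, ∞) and its derivative is g_n′(x) = (1/2) E[ exp(−(x + R²)/2) · ( R² · (2^{−n/2}/(√π Γ((n+1)/2))) ∫₀^π exp(R√x cos θ) sin^{n} θ dθ − (2^{1−n/2}/(√π Γ((n−1)/2))) ∫₀^π exp(R√x cos θ) sin^{n−2} θ dθ ) ]. -/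
open MeasureTheory Real intervalIntegral

noncomputable def Jint (m : ℕ) (u : ℝ) : ℝ :=
  ∫ θ in (0 : ℝ)..π, Real.exp (u * Real.cos θ) * (Real.sin θ) ^ m

lemma Jint_cont_integrand (m : ℕ) (v : ℝ) :
    Continuous fun θ : ℝ => Real.exp (v * Real.cos θ) * Real.sin θ ^ m :=
  ((continuous_const.mul Real.continuous_cos).rexp).mul (Real.continuous_sin.pow m)

lemma Jint_hasDerivAt (m : ℕ) (u : ℝ) :
    HasDerivAt (Jint m)
      (∫ θ in (0 : ℝ)..π, Real.cos θ * Real.exp (u * Real.cos θ) * Real.sin θ ^ m) u := by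
  have h := intervalIntegral.hasDerivAt_integral_of_dominated_loc_of_deriv_le
    (F := fun (v : ℝ) (θ : ℝ) => Real.exp (v * Real.cos θ) * Real.sin θ ^ m)
    (F' := fun (v : ℝ) (θ : ℝ) => Real.cos θ * Real.exp (v * Real.cos θ) * Real.sin θ ^ m)
    (bound := fun _ => Real.exp (|u| + 1)) (μ := volume) (a := 0) (b := π) (x₀ := u) (s := Metric.ball u 1)
    (Metric.ball_mem_nhds u one_pos)
    (Filter.Eventually.of_forall fun v =>
      ((Jint_cont_integrand m v).aestronglyMeasurable).restrict)
    ((Jint_cont_integrand m u).intervalIntegrable 0 π)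
    (((Real.continuous_cos.mul ((continuous_const.mul Real.continuous_cos).rexp)).mul
      (Real.continuous_sin.pow m)).aestronglyMeasurable).restrict
    ?_ (intervalIntegrable_const) ?_
  · exact h.2
  · refine Filter.Eventually.of_forall fun t _ => fun v hv => ?_
    have hv' : |v| ≤ |u| + 1 := by
      have := abs_sub_abs_le_abs_sub v u
      have h2 : |v - u| < 1 := by simpa [Real.dist_eq] using hv
      linarith
    have h1 : |Real.cos t| ≤ 1 := Real.abs_cos_le_one t
    have h2 : |Real.sin t ^ m| ≤ 1 := by
      rw [abs_pow]; exact pow_le_one₀ (abs_nonneg _) (Real.abs_sin_le_one t)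
    have h3 : Real.exp (v * Real.cos t) ≤ Real.exp (|u| + 1) := by
      apply Real.exp_le_exp.2
      calc v * Real.cos t ≤ |v * Real.cos t| := le_abs_self _
        _ = |v| * |Real.cos t| := abs_mul _ _
        _ ≤ (|u| + 1) * 1 := by
            apply mul_le_mul hv' h1 (abs_nonneg _) (by positivity)
        _ = |u| + 1 := mul_one _
    rw [Real.norm_eq_abs, abs_mul, abs_mul, Real.abs_exp]
    calc |Real.cos t| * Real.exp (v * Real.cos t) * |Real.sin t ^ m|
        ≤ 1 * Real.exp (|u| + 1) * 1 := by
          apply mul_le_mul (mul_le_mul h1 h3 (Real.exp_pos _).le (by norm_num)) h2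
            (abs_nonneg _) (by positivity)
      _ = Real.exp (|u| + 1) := by ring
  · refine Filter.Eventually.of_forall fun t _ => fun v _ => ?_
    have := ((hasDerivAt_mul_const (x := v) (Real.cos t)).exp).mul_const (Real.sin t ^ m)
    refine this.congr_deriv ?_
    ring

lemma Jint_ibp (m : ℕ) (u : ℝ) :
    ((m : ℝ) + 1) * ∫ θ in (0 : ℝ)..π, Real.cos θ * Real.exp (u * Real.cos θ) * Real.sin θ ^ m
      = u * Jint (m + 2) u := by
  have key : ∀ θ ∈ Set.uIcc (0 : ℝ) π,
      HasDerivAt (fun θ => Real.exp (u * Real.cos θ) * Real.sin θ ^ (m + 1))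
        (((m : ℝ) + 1) * (Real.cos θ * Real.exp (u * Real.cos θ) * Real.sin θ ^ m)
          - u * (Real.exp (u * Real.cos θ) * Real.sin θ ^ (m + 2))) θ := by
    intro θ _
    have h1 : HasDerivAt (fun θ : ℝ => Real.exp (u * Real.cos θ))
        (Real.exp (u * Real.cos θ) * (u * (-Real.sin θ))) θ :=
      ((Real.hasDerivAt_cos θ).const_mul u).exp
    have h2 : HasDerivAt (fun θ : ℝ => Real.sin θ ^ (m + 1))
        (((m : ℕ) + 1 : ℕ) * Real.sin θ ^ m * Real.cos θ) θ := by
      simpa using (Real.hasDerivAt_sin θ).fun_pow (m + 1)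
    have := h1.mul h2
    refine this.congr_deriv ?_
    push_cast
    ring
  have hcont1 : Continuous fun θ : ℝ =>
      ((m : ℝ) + 1) * (Real.cos θ * Real.exp (u * Real.cos θ) * Real.sin θ ^ m)
        - u * (Real.exp (u * Real.cos θ) * Real.sin θ ^ (m + 2)) := by
    apply Continuous.sub
    · exact continuous_const.mul ((Real.continuous_cos.mul
        ((continuous_const.mul Real.continuous_cos).rexp)).mul (Real.continuous_sin.pow m))
    · exact continuous_const.mul (Jint_cont_integrand (m + 2) u)
  have h0 := intervalIntegral.integral_eq_sub_of_hasDerivAt key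
    (hcont1.intervalIntegrable 0 π)
  simp only [Real.sin_pi, Real.sin_zero, Real.cos_pi, Real.cos_zero,
    zero_pow (Nat.succ_ne_zero m), mul_zero, sub_zero, zero_sub, neg_zero, sub_self] at h0
  have hsplit : (∫ θ in (0 : ℝ)..π,
      (((m : ℝ) + 1) * (Real.cos θ * Real.exp (u * Real.cos θ) * Real.sin θ ^ m)
        - u * (Real.exp (u * Real.cos θ) * Real.sin θ ^ (m + 2))))
      = ((m : ℝ) + 1) * (∫ θ in (0 : ℝ)..π,
          Real.cos θ * Real.exp (u * Real.cos θ) * Real.sin θ ^ m)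
        - u * ∫ θ in (0 : ℝ)..π, Real.exp (u * Real.cos θ) * Real.sin θ ^ (m + 2) := by
    rw [intervalIntegral.integral_sub, intervalIntegral.integral_const_mul,
      intervalIntegral.integral_const_mul]
    · exact (continuous_const.mul ((Real.continuous_cos.mul
        ((continuous_const.mul Real.continuous_cos).rexp)).mul
          (Real.continuous_sin.pow m))).intervalIntegrable 0 π
    · exact (continuous_const.mul (Jint_cont_integrand (m + 2) u)).intervalIntegrable 0 π
  rw [hsplit] at h0
  unfold Jint
  linarith

lemma Jint_bound (m : ℕ) {u K : ℝ} (hu : |u| ≤ K) : |Jint m u| ≤ π * Real.exp K := by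
  have h := intervalIntegral.norm_integral_le_of_norm_le_const
    (C := Real.exp K) (f := fun θ => Real.exp (u * Real.cos θ) * Real.sin θ ^ m)
    (a := 0) (b := π) ?_
  · rw [Real.norm_eq_abs] at h
    have : |π - 0| = π := by rw [sub_zero, abs_of_nonneg Real.pi_pos.le]
    rw [this] at h
    calc |Jint m u| ≤ Real.exp K * π := h
      _ = π * Real.exp K := mul_comm _ _
  · intro t _
    rw [Real.norm_eq_abs, abs_mul, Real.abs_exp]
    have h2 : |Real.sin t ^ m| ≤ 1 := by
      rw [abs_pow]; exact pow_le_one₀ (abs_nonneg _) (Real.abs_sin_le_one t)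
    have h3 : Real.exp (u * Real.cos t) ≤ Real.exp K := by
      apply Real.exp_le_exp.2
      calc u * Real.cos t ≤ |u * Real.cos t| := le_abs_self _
        _ = |u| * |Real.cos t| := abs_mul _ _
        _ ≤ K * 1 := mul_le_mul hu (Real.abs_cos_le_one t) (abs_nonneg _)
            (le_trans (abs_nonneg _) hu)
        _ = K := mul_one _
    calc Real.exp (u * Real.cos t) * |Real.sin t ^ m|
        ≤ Real.exp K * 1 := mul_le_mul h3 h2 (abs_nonneg _) (Real.exp_pos _).le
      _ = Real.exp K := mul_one _

lemma const_rel (n : ℕ) (hn : 2 ≤ n) :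
    (2 : ℝ) ^ ((1 : ℝ) - (n : ℝ) / 2) / (Real.sqrt π * Real.Gamma (((n : ℝ) - 1) / 2))
      = ((n : ℝ) - 1) *
        ((2 : ℝ) ^ (-(n : ℝ) / 2) / (Real.sqrt π * Real.Gamma (((n : ℝ) + 1) / 2))) := by
  have hn' : (2 : ℝ) ≤ (n : ℝ) := by exact_mod_cast hn
  have hpos : 0 < ((n : ℝ) - 1) / 2 := by linarith
  have h2 : Real.Gamma (((n : ℝ) + 1) / 2)
      = (((n : ℝ) - 1) / 2) * Real.Gamma (((n : ℝ) - 1) / 2) := by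
    have h1 : ((n : ℝ) + 1) / 2 = ((n : ℝ) - 1) / 2 + 1 := by ring
    rw [h1, Real.Gamma_add_one hpos.ne']
  have h3 : (2 : ℝ) ^ ((1 : ℝ) - (n : ℝ) / 2) = 2 * (2 : ℝ) ^ (-(n : ℝ) / 2) := by
    rw [show (1 : ℝ) - (n : ℝ) / 2 = 1 + -(n : ℝ) / 2 by ring,
      Real.rpow_add two_pos, Real.rpow_one]
  have hΓ : 0 < Real.Gamma (((n : ℝ) - 1) / 2) := Real.Gamma_pos_of_pos hpos
  have hπ : 0 < Real.sqrt π := Real.sqrt_pos.2 Real.pi_pos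
  have hn1 : ((n : ℝ) - 1) ≠ 0 := by linarith
  rw [h2, h3]
  field_simp

lemma perOmega (n : ℕ) (hn : 2 ≤ n) (r : ℝ) {x : ℝ} (hx : 0 < x) :
    HasDerivAt (fun y => Real.exp (-(y + r ^ 2) / 2) *
        ((2 : ℝ) ^ ((1 : ℝ) - (n : ℝ) / 2) / (Real.sqrt π * Real.Gamma (((n : ℝ) - 1) / 2))) *
        Jint (n - 2) (r * Real.sqrt y))
      ((1 / 2) * (Real.exp (-(x + r ^ 2) / 2) *
        (r ^ 2 * ((2 : ℝ) ^ (-(n : ℝ) / 2) / (Real.sqrt π * Real.Gamma (((n : ℝ) + 1) / 2))) *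
            Jint n (r * Real.sqrt x)
          - ((2 : ℝ) ^ ((1 : ℝ) - (n : ℝ) / 2) / (Real.sqrt π * Real.Gamma (((n : ℝ) - 1) / 2))) *
            Jint (n - 2) (r * Real.sqrt x)))) x := by
  set c₂ : ℝ := (2 : ℝ) ^ (-(n : ℝ) / 2) / (Real.sqrt π * Real.Gamma (((n : ℝ) + 1) / 2)) with hc₂
  set c₁ : ℝ := (2 : ℝ) ^ ((1 : ℝ) - (n : ℝ) / 2) /
    (Real.sqrt π * Real.Gamma (((n : ℝ) - 1) / 2)) with hc₁
  have hc : c₁ = ((n : ℝ) - 1) * c₂ := const_rel n hn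
  have hsx : Real.sqrt x ≠ 0 := (Real.sqrt_pos.2 hx).ne'
  have hn1 : ((n : ℝ) - 1) ≠ 0 := by
    have : (2 : ℝ) ≤ (n : ℝ) := by exact_mod_cast hn
    linarith
  have hE : HasDerivAt (fun y : ℝ => Real.exp (-(y + r ^ 2) / 2))
      (Real.exp (-(x + r ^ 2) / 2) * (-(1 / 2))) x := by
    have h0 : HasDerivAt (fun y : ℝ => y + r ^ 2) 1 x := (hasDerivAt_id x).add_const _
    have h1 := (h0.neg).div_const 2
    have h : HasDerivAt (fun y : ℝ => -(y + r ^ 2) / 2) (-(1 / 2)) x := by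
      exact h1.congr_deriv (by norm_num)
    exact h.exp
  have hsq : HasDerivAt (fun y : ℝ => r * Real.sqrt y) (r * (1 / (2 * Real.sqrt x))) x :=
    (Real.hasDerivAt_sqrt hx.ne').const_mul r
  set D : ℝ := ∫ θ in (0 : ℝ)..π,
    Real.cos θ * Real.exp (r * Real.sqrt x * Real.cos θ) * Real.sin θ ^ (n - 2) with hD
  have hJcomp : HasDerivAt (fun y : ℝ => Jint (n - 2) (r * Real.sqrt y))
      (D * (r * (1 / (2 * Real.sqrt x)))) x :=
    HasDerivAt.comp (h₂ := Jint (n - 2)) x (Jint_hasDerivAt (n - 2) (r * Real.sqrt x)) hsq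
  have hDval : ((n : ℝ) - 1) * D = (r * Real.sqrt x) * Jint n (r * Real.sqrt x) := by
    have h := Jint_ibp (n - 2) (r * Real.sqrt x)
    have hcast : ((n - 2 : ℕ) : ℝ) + 1 = (n : ℝ) - 1 := by
      rw [Nat.cast_sub hn]; push_cast; ring
    have hnn : n - 2 + 2 = n := Nat.sub_add_cancel hn
    rw [hcast, hnn] at h
    exact h
  have total := (hE.mul_const c₁).mul hJcomp
  refine total.congr_deriv ?_
  have hD' : D = (r * Real.sqrt x) * Jint n (r * Real.sqrt x) / ((n : ℝ) - 1) := by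
    field_simp
    linarith [hDval]
  rw [hD', hc]
  field_simp
  ring

/-- for `n ≥ 2` and a radius variable `0 ≤ R ≤ A` a.s., the function
`g_n(x) = E[exp(−(x+R²)/2) (2^{1−n/2}/(√π Γ((n−1)/2))) ∫₀^π exp(R√x cos θ) sin^{n−2}θ dθ]`
is differentiable on `(0, ∞)` with derivative
`g_n′(x) = (1/2) E[exp(−(x+R²)/2) (R² (2^{−n/2}/(√π Γ((n+1)/2))) ∫₀^π exp(R√x cosθ) sin^n θ dθ
  − (2^{1−n/2}/(√π Γ((n−1)/2))) ∫₀^π exp(R√x cosθ) sin^{n−2}θ dθ)]`. -/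
theorem stmt_12 {Ω : Type*} [MeasurableSpace Ω] (μ : Measure Ω) [IsProbabilityMeasure μ]
    (n : ℕ) (hn : 2 ≤ n) (A : ℝ) (hA : 0 < A)
    (R : Ω → ℝ) (hRmeas : Measurable R)
    (hbd : ∀ᵐ ω ∂μ, R ω ∈ Set.Icc 0 A)
    (gn : ℝ → ℝ)
    (hg : ∀ x : ℝ, 0 < x → gn x =
      ∫ ω, (Real.exp (-(x + R ω ^ 2) / 2) *
        ((2 : ℝ) ^ ((1 : ℝ) - (n : ℝ) / 2) / (Real.sqrt π * Real.Gamma (((n : ℝ) - 1) / 2))) *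
        ∫ θ in (0 : ℝ)..π, Real.exp (R ω * Real.sqrt x * Real.cos θ) *
          (Real.sin θ) ^ (n - 2)) ∂μ) :
    ∀ x : ℝ, 0 < x →
      HasDerivAt gn
        ((1 / 2) * ∫ ω, (Real.exp (-(x + R ω ^ 2) / 2) *
          (R ω ^ 2 * ((2 : ℝ) ^ (-(n : ℝ) / 2) / (Real.sqrt π * Real.Gamma (((n : ℝ) + 1) / 2))) *
              (∫ θ in (0 : ℝ)..π, Real.exp (R ω * Real.sqrt x * Real.cos θ) *
                (Real.sin θ) ^ n) -
            ((2 : ℝ) ^ ((1 : ℝ) - (n : ℝ) / 2) / (Real.sqrt π * Real.Gamma (((n : ℝ) - 1) / 2))) *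
              ∫ θ in (0 : ℝ)..π, Real.exp (R ω * Real.sqrt x * Real.cos θ) *
                (Real.sin θ) ^ (n - 2))) ∂μ)
        x := by
  intro x hx
  set c₂ : ℝ := (2 : ℝ) ^ (-(n : ℝ) / 2) / (Real.sqrt π * Real.Gamma (((n : ℝ) + 1) / 2)) with hc₂
  set c₁ : ℝ := (2 : ℝ) ^ ((1 : ℝ) - (n : ℝ) / 2) /
    (Real.sqrt π * Real.Gamma (((n : ℝ) - 1) / 2)) with hc₁
  have hn2 : (2 : ℝ) ≤ (n : ℝ) := by exact_mod_cast hn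
  have hπ : 0 < Real.sqrt π := Real.sqrt_pos.2 Real.pi_pos
  have hc₁pos : 0 < c₁ := by
    apply div_pos (Real.rpow_pos_of_pos two_pos _)
    exact mul_pos hπ (Real.Gamma_pos_of_pos (by linarith))
  have hc₂pos : 0 < c₂ := by
    apply div_pos (Real.rpow_pos_of_pos two_pos _)
    exact mul_pos hπ (Real.Gamma_pos_of_pos (by linarith))
  -- continuity / measurability helpers
  have hJcont : ∀ m : ℕ, Continuous (Jint m) := fun m =>
    continuous_iff_continuousAt.2 fun u => (Jint_hasDerivAt m u).differentiableAt.continuousAt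
  have hmeasF : ∀ y : ℝ, Measurable fun ω =>
      Real.exp (-(y + R ω ^ 2) / 2) * c₁ * Jint (n - 2) (R ω * Real.sqrt y) := by
    intro y
    have h1 : Measurable fun ω => Real.exp (-(y + R ω ^ 2) / 2) :=
      (((measurable_const.add (hRmeas.pow_const 2)).neg.div_const 2)).exp
    exact (h1.mul_const c₁).mul
      ((hJcont (n - 2)).measurable.comp (hRmeas.mul_const (Real.sqrt y)))
  have hmeasF' : ∀ y : ℝ, Measurable fun ω => (1 / 2) * (Real.exp (-(y + R ω ^ 2) / 2) *
      (R ω ^ 2 * c₂ * Jint n (R ω * Real.sqrt y)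
        - c₁ * Jint (n - 2) (R ω * Real.sqrt y))) := by
    intro y
    have h1 : Measurable fun ω => Real.exp (-(y + R ω ^ 2) / 2) :=
      (((measurable_const.add (hRmeas.pow_const 2)).neg.div_const 2)).exp
    exact measurable_const.mul (h1.mul
      ((((hRmeas.pow_const 2).mul_const c₂).mul
        ((hJcont n).measurable.comp (hRmeas.mul_const (Real.sqrt y)))).sub
      (measurable_const.mul
        ((hJcont (n - 2)).measurable.comp (hRmeas.mul_const (Real.sqrt y))))))
  set K : ℝ := A * Real.sqrt (2 * x) with hK
  have hKnn : 0 ≤ K := mul_nonneg hA.le (Real.sqrt_nonneg _)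
  set C : ℝ := (1 / 2) * (A ^ 2 * c₂ * (π * Real.exp K) + c₁ * (π * Real.exp K)) with hC
  have main := _root_.hasDerivAt_integral_of_dominated_loc_of_deriv_le
    (μ := μ)
    (F := fun (y : ℝ) (ω : Ω) =>
      Real.exp (-(y + R ω ^ 2) / 2) * c₁ * Jint (n - 2) (R ω * Real.sqrt y))
    (F' := fun (y : ℝ) (ω : Ω) => (1 / 2) * (Real.exp (-(y + R ω ^ 2) / 2) *
      (R ω ^ 2 * c₂ * Jint n (R ω * Real.sqrt y)
        - c₁ * Jint (n - 2) (R ω * Real.sqrt y))))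
    (x₀ := x) (bound := fun _ => C) (s := Metric.ball x (x / 2)) (Metric.ball_mem_nhds x (half_pos hx))
    (Filter.Eventually.of_forall fun y => (hmeasF y).aestronglyMeasurable)
    ?_ ((hmeasF' x).aestronglyMeasurable) ?_ (integrable_const C) ?_
  · obtain ⟨-, hder⟩ := main
    have hint : (∫ ω, (1 / 2) * (Real.exp (-(x + R ω ^ 2) / 2) *
        (R ω ^ 2 * c₂ * Jint n (R ω * Real.sqrt x)
          - c₁ * Jint (n - 2) (R ω * Real.sqrt x))) ∂μ)
        = (1 / 2) * ∫ ω, (Real.exp (-(x + R ω ^ 2) / 2) *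
          (R ω ^ 2 * c₂ * Jint n (R ω * Real.sqrt x)
            - c₁ * Jint (n - 2) (R ω * Real.sqrt x))) ∂μ :=
      integral_const_mul _ _
    rw [hint] at hder
    have heq : gn =ᶠ[nhds x] fun y => ∫ ω,
        Real.exp (-(y + R ω ^ 2) / 2) * c₁ * Jint (n - 2) (R ω * Real.sqrt y) ∂μ := by
      filter_upwards [Ioi_mem_nhds hx] with y hy
      simpa [Jint] using hg y hy
    have := hder.congr_of_eventuallyEq heq
    simpa [Jint] using this
  · -- integrability of F x
    apply Integrable.mono' (integrable_const (c₁ * (π * Real.exp K)))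
      (hmeasF x).aestronglyMeasurable
    filter_upwards [hbd] with ω hω
    obtain ⟨hr0, hrA⟩ := hω
    have hexp : Real.exp (-(x + R ω ^ 2) / 2) ≤ 1 := by
      rw [Real.exp_le_one_iff]
      nlinarith [sq_nonneg (R ω)]
    have hJ : |Jint (n - 2) (R ω * Real.sqrt x)| ≤ π * Real.exp K := by
      apply Jint_bound
      rw [abs_of_nonneg (mul_nonneg hr0 (Real.sqrt_nonneg _))]
      apply mul_le_mul hrA (Real.sqrt_le_sqrt (by linarith)) (Real.sqrt_nonneg _) hA.le
    rw [Real.norm_eq_abs, abs_mul, abs_mul, Real.abs_exp, abs_of_nonneg hc₁pos.le]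
    calc Real.exp (-(x + R ω ^ 2) / 2) * c₁ * |Jint (n - 2) (R ω * Real.sqrt x)|
        ≤ 1 * c₁ * (π * Real.exp K) := by
          apply mul_le_mul (mul_le_mul hexp le_rfl hc₁pos.le (by norm_num)) hJ
            (abs_nonneg _) (by positivity)
      _ = c₁ * (π * Real.exp K) := by ring
  · -- bound on F'
    filter_upwards [hbd] with ω hω
    obtain ⟨hr0, hrA⟩ := hω
    intro y hy
    have hy1 : |y - x| < x / 2 := by simpa [Real.dist_eq] using hy
    obtain ⟨hyl, hyr⟩ := abs_lt.1 hy1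
    have hy0 : 0 < y := by linarith
    have hy2 : y ≤ 2 * x := by linarith
    have hexp : Real.exp (-(y + R ω ^ 2) / 2) ≤ 1 := by
      rw [Real.exp_le_one_iff]
      nlinarith [sq_nonneg (R ω)]
    have hub : |R ω * Real.sqrt y| ≤ K := by
      rw [abs_of_nonneg (mul_nonneg hr0 (Real.sqrt_nonneg _))]
      exact mul_le_mul hrA (Real.sqrt_le_sqrt hy2) (Real.sqrt_nonneg _) hA.le
    have hJn : |Jint n (R ω * Real.sqrt y)| ≤ π * Real.exp K := Jint_bound n hub
    have hJm : |Jint (n - 2) (R ω * Real.sqrt y)| ≤ π * Real.exp K := Jint_bound (n - 2) hub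
    rw [Real.norm_eq_abs, abs_mul, abs_mul]
    have h12 : |(1 : ℝ) / 2| = 1 / 2 := by norm_num
    rw [h12, Real.abs_exp]
    have htri : |R ω ^ 2 * c₂ * Jint n (R ω * Real.sqrt y)
        - c₁ * Jint (n - 2) (R ω * Real.sqrt y)|
        ≤ A ^ 2 * c₂ * (π * Real.exp K) + c₁ * (π * Real.exp K) := by
      calc |R ω ^ 2 * c₂ * Jint n (R ω * Real.sqrt y)
            - c₁ * Jint (n - 2) (R ω * Real.sqrt y)|
          ≤ |R ω ^ 2 * c₂ * Jint n (R ω * Real.sqrt y)|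
            + |c₁ * Jint (n - 2) (R ω * Real.sqrt y)| := abs_sub _ _
        _ = R ω ^ 2 * c₂ * |Jint n (R ω * Real.sqrt y)|
            + c₁ * |Jint (n - 2) (R ω * Real.sqrt y)| := by
            rw [abs_mul, abs_mul, abs_mul, abs_of_nonneg (sq_nonneg (R ω)),
              abs_of_nonneg hc₂pos.le, abs_of_nonneg hc₁pos.le]
        _ ≤ A ^ 2 * c₂ * (π * Real.exp K) + c₁ * (π * Real.exp K) := by
            apply add_le_add
            · apply mul_le_mul _ hJn (abs_nonneg _) (by positivity)
              apply mul_le_mul _ le_rfl hc₂pos.le (by positivity)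
              nlinarith
            · exact mul_le_mul le_rfl hJm (abs_nonneg _) hc₁pos.le
    calc (1 : ℝ) / 2 * (Real.exp (-(y + R ω ^ 2) / 2) *
          |R ω ^ 2 * c₂ * Jint n (R ω * Real.sqrt y)
            - c₁ * Jint (n - 2) (R ω * Real.sqrt y)|)
        ≤ (1 : ℝ) / 2 * (1 * (A ^ 2 * c₂ * (π * Real.exp K) + c₁ * (π * Real.exp K))) := by
          apply mul_le_mul le_rfl _ (by positivity) (by norm_num)
          exact mul_le_mul hexp htri (abs_nonneg _) (by norm_num)
      _ = C := by rw [hC]; ring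
  · -- differentiability
    refine Filter.Eventually.of_forall fun ω => fun y hy => ?_
    have hy1 : |y - x| < x / 2 := by simpa [Real.dist_eq] using hy
    obtain ⟨hyl, hyr⟩ := abs_lt.1 hy1
    have hy0 : 0 < y := by linarith
    exact perOmega n hn (R ω) hy0
end

section
/- Let n ≥ 2 be an integer, A > 0, and let R be a real random variable with 0 ≤ R ≤ A almost surely. Let G : ℂ → ℂ be the entire function G(z) = (1/2) E[ exp(−(z + R²)/2) · ( R² · (2^{−n/2}/(√π Γ((n+1)/2))) ∫₀^π exp(R√z cos θ) sin^{n} θ dθ − (2^{1−n/2}/(√π Γ((n−1)/2))) ∫₀^π exp(R√z cos θ) sin^{n−2} θ dθ ) ], where √z denotes the principal square root. Let M > 0 and let B be a real number with 0 ≤ B ≤ 2M². Then max_{|z| ≤ M²} |G(z + B/2)| ≤ (γ_n/2) · (A²/(n−1) + 1) · exp((A + √2·M)²/2), where γ_n = √π/(2^{n/2−1} Γ((n−1)/2)). -/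
open MeasureTheory Real intervalIntegral

/-- upper bound on the modulus, over the disc `|z| ≤ M²` shifted by `B/2`,
of the entire extension `G` of the derivative of `g_n`:
`max_{|z|≤M²} |G(z+B/2)| ≤ (γ_n/2)(A²/(n−1)+1) exp((A+√2 M)²/2)` with
`γ_n = √π/(2^{n/2−1} Γ((n−1)/2))`. -/
theorem stmt_14 {Ω : Type*} [MeasurableSpace Ω] (μ : Measure Ω) [IsProbabilityMeasure μ]
    (n : ℕ) (hn : 2 ≤ n) (A : ℝ) (hA : 0 < A)
    (R : Ω → ℝ) (hRmeas : Measurable R)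
    (hbd : ∀ᵐ ω ∂μ, R ω ∈ Set.Icc 0 A)
    (G : ℂ → ℂ)
    (hG : ∀ z : ℂ, G z = (1 / 2 : ℂ) *
      ∫ ω, (Complex.exp (-(z + ((R ω : ℂ)) ^ 2) / 2) *
        (((R ω : ℂ)) ^ 2 *
            ((((2 : ℝ) ^ (-(n : ℝ) / 2) / (Real.sqrt π * Real.Gamma (((n : ℝ) + 1) / 2)) : ℝ)) : ℂ) *
            (∫ θ in (0 : ℝ)..π, Complex.exp ((R ω : ℂ) * z ^ (1 / 2 : ℂ) * (Real.cos θ : ℂ)) *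
              ((Real.sin θ : ℂ)) ^ n) -
          ((((2 : ℝ) ^ ((1 : ℝ) - (n : ℝ) / 2) /
              (Real.sqrt π * Real.Gamma (((n : ℝ) - 1) / 2)) : ℝ)) : ℂ) *
            ∫ θ in (0 : ℝ)..π, Complex.exp ((R ω : ℂ) * z ^ (1 / 2 : ℂ) * (Real.cos θ : ℂ)) *
              ((Real.sin θ : ℂ)) ^ (n - 2))) ∂μ)
    (M : ℝ) (hM : 0 < M) (B : ℝ) (hB0 : 0 ≤ B) (hB : B ≤ 2 * M ^ 2) :
    ∀ z : ℂ, ‖z‖ ≤ M ^ 2 →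
      ‖G (z + (B / 2 : ℝ))‖ ≤
        (Real.sqrt π / ((2 : ℝ) ^ ((n : ℝ) / 2 - 1) * Real.Gamma (((n : ℝ) - 1) / 2))) / 2 *
          (A ^ 2 / ((n : ℝ) - 1) + 1) *
          Real.exp ((A + Real.sqrt 2 * M) ^ 2 / 2) := by
  intro z hz
  set c : ℝ := (2 : ℝ) ^ (-(n : ℝ) / 2) / (Real.sqrt π * Real.Gamma (((n : ℝ) + 1) / 2)) with hc_def
  set d : ℝ := (2 : ℝ) ^ ((1 : ℝ) - (n : ℝ) / 2) /
      (Real.sqrt π * Real.Gamma (((n : ℝ) - 1) / 2)) with hd_def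
  set γ : ℝ := Real.sqrt π / ((2 : ℝ) ^ ((n : ℝ) / 2 - 1) * Real.Gamma (((n : ℝ) - 1) / 2))
    with hγ_def
  have hn2 : (2 : ℝ) ≤ (n : ℝ) := by exact_mod_cast hn
  have hx : (0 : ℝ) < ((n : ℝ) - 1) / 2 := by linarith
  have hΓx : 0 < Real.Gamma (((n : ℝ) - 1) / 2) := Real.Gamma_pos_of_pos hx
  have hΓ1 : Real.Gamma (((n : ℝ) + 1) / 2) = (((n : ℝ) - 1) / 2) * Real.Gamma (((n : ℝ) - 1) / 2) := by
    rw [show ((n : ℝ) + 1) / 2 = ((n : ℝ) - 1) / 2 + 1 by ring, Real.Gamma_add_one (ne_of_gt hx)]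
  have hΓ1pos : 0 < Real.Gamma (((n : ℝ) + 1) / 2) := by rw [hΓ1]; positivity
  have hsπ : 0 < Real.sqrt π := Real.sqrt_pos.mpr Real.pi_pos
  have hc : 0 < c := by rw [hc_def]; positivity
  have hd : 0 < d := by rw [hd_def]; positivity
  -- key coefficient identity
  have hkey : π * (A ^ 2 * c + d) = γ * (A ^ 2 / ((n : ℝ) - 1) + 1) := by
    have hs : (0 : ℝ) < (2 : ℝ) ^ ((n : ℝ) / 2) := Real.rpow_pos_of_pos two_pos _
    have e1 : (2 : ℝ) ^ (-(n : ℝ) / 2) = ((2 : ℝ) ^ ((n : ℝ) / 2))⁻¹ := by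
      rw [show -(n : ℝ) / 2 = -((n : ℝ) / 2) by ring, Real.rpow_neg (by norm_num)]
    have e2 : (2 : ℝ) ^ ((1 : ℝ) - (n : ℝ) / 2) = 2 / (2 : ℝ) ^ ((n : ℝ) / 2) := by
      rw [Real.rpow_sub two_pos, Real.rpow_one]
    have e3 : (2 : ℝ) ^ ((n : ℝ) / 2 - 1) = (2 : ℝ) ^ ((n : ℝ) / 2) / 2 := by
      rw [Real.rpow_sub two_pos, Real.rpow_one]
    have hn1 : ((n : ℝ) - 1) ≠ 0 := by linarith
    rw [hc_def, hd_def, hγ_def, hΓ1, e1, e2, e3]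
    set p := Real.sqrt π with hp_def
    rw [show π = p * p by rw [hp_def]; exact (Real.mul_self_sqrt Real.pi_pos.le).symm]
    field_simp
  set w : ℂ := z + ((B / 2 : ℝ) : ℂ) with hw_def
  have habsw : ‖w‖ ≤ 2 * M ^ 2 := by
    calc ‖w‖ ≤ ‖z‖ + ‖((B / 2 : ℝ) : ℂ)‖ := norm_add_le _ _
      _ = ‖z‖ + B / 2 := by rw [Complex.norm_real, Real.norm_eq_abs, abs_of_nonneg (by linarith)]
      _ ≤ M ^ 2 + M ^ 2 := add_le_add hz (by linarith)
      _ = 2 * M ^ 2 := by ring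
  have hrew : -(M ^ 2) ≤ w.re := by
    have h1 : |z.re| ≤ ‖z‖ := Complex.abs_re_le_norm z
    have : w.re = z.re + B / 2 := by simp [hw_def]
    rw [this]
    have := abs_le.mp h1
    linarith [this.1]
  have hsqw : ‖w ^ (1 / 2 : ℂ)‖ ≤ Real.sqrt 2 * M := by
    have h' : ‖w ^ (1 / 2 : ℂ)‖ ≤ ‖w‖ ^ ((1 : ℝ) / 2) := by
      have him : ((1 / 2 : ℂ)).im = 0 := by norm_num [Complex.div_im]
      have hre : ((1 / 2 : ℂ)).re = (1 : ℝ) / 2 := by norm_num [Complex.div_re]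
      have h2 := Complex.norm_cpow_le w (1 / 2 : ℂ)
      rw [him, hre] at h2
      simpa using h2
    calc ‖w ^ (1 / 2 : ℂ)‖ ≤ ‖w‖ ^ ((1 : ℝ) / 2) := h'
      _ ≤ (2 * M ^ 2) ^ ((1 : ℝ) / 2) := by
          apply Real.rpow_le_rpow (norm_nonneg _) habsw (by norm_num)
      _ = Real.sqrt (2 * M ^ 2) := by rw [Real.sqrt_eq_rpow]
      _ = Real.sqrt 2 * M := by
          rw [Real.sqrt_mul (by norm_num), Real.sqrt_sq hM.le]
  -- bound on each inner interval integral
  have hIbound : ∀ r : ℝ, 0 ≤ r → r ≤ A → ∀ k : ℕ,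
      ‖∫ θ in (0 : ℝ)..π, Complex.exp ((r : ℂ) * w ^ (1 / 2 : ℂ) * (Real.cos θ : ℂ)) *
        ((Real.sin θ : ℂ)) ^ k‖ ≤ Real.exp (Real.sqrt 2 * M * A) * π := by
    intro r hr0 hrA k
    have hb : ∀ θ ∈ Set.uIoc (0 : ℝ) π,
        ‖Complex.exp ((r : ℂ) * w ^ (1 / 2 : ℂ) * (Real.cos θ : ℂ)) *
          ((Real.sin θ : ℂ)) ^ k‖ ≤ Real.exp (Real.sqrt 2 * M * A) := by
      intro θ _
      rw [norm_mul]
      have h1 : ‖Complex.exp ((r : ℂ) * w ^ (1 / 2 : ℂ) * (Real.cos θ : ℂ))‖ ≤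
          Real.exp (Real.sqrt 2 * M * A) := by
        rw [Complex.norm_exp]
        apply Real.exp_le_exp.mpr
        calc ((r : ℂ) * w ^ (1 / 2 : ℂ) * (Real.cos θ : ℂ)).re
            ≤ ‖(r : ℂ) * w ^ (1 / 2 : ℂ) * (Real.cos θ : ℂ)‖ := Complex.re_le_norm _
          _ = r * ‖w ^ (1 / 2 : ℂ)‖ * |Real.cos θ| := by
              rw [norm_mul, norm_mul, Complex.norm_real, Complex.norm_real, Real.norm_eq_abs, Real.norm_eq_abs,
                abs_of_nonneg hr0]
          _ ≤ A * (Real.sqrt 2 * M) * 1 := by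
              have hcos : |Real.cos θ| ≤ 1 := Real.abs_cos_le_one θ
              have h0 : (0 : ℝ) ≤ ‖w ^ (1 / 2 : ℂ)‖ := norm_nonneg _
              gcongr
          _ = Real.sqrt 2 * M * A := by ring
      have h2 : ‖((Real.sin θ : ℂ)) ^ k‖ ≤ 1 := by
        rw [norm_pow, Complex.norm_real, Real.norm_eq_abs]
        exact pow_le_one₀ (abs_nonneg _) (Real.abs_sin_le_one θ)
      calc ‖Complex.exp _‖ * ‖((Real.sin θ : ℂ)) ^ k‖
          ≤ Real.exp (Real.sqrt 2 * M * A) * 1 := by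
            apply mul_le_mul h1 h2 (norm_nonneg _) (Real.exp_pos _).le
        _ = Real.exp (Real.sqrt 2 * M * A) := by ring
    have := intervalIntegral.norm_integral_le_of_norm_le_const hb
    rwa [sub_zero, abs_of_nonneg Real.pi_pos.le] at this
  set C : ℝ := Real.exp (M ^ 2 / 2) * ((A ^ 2 * c + d) * (Real.exp (Real.sqrt 2 * M * A) * π))
    with hC_def
  -- a.e. pointwise bound on the integrand
  have hae : ∀ᵐ ω ∂μ, ‖Complex.exp (-(w + ((R ω : ℂ)) ^ 2) / 2) *
        (((R ω : ℂ)) ^ 2 * ((c : ℝ) : ℂ) *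
            (∫ θ in (0 : ℝ)..π, Complex.exp ((R ω : ℂ) * w ^ (1 / 2 : ℂ) * (Real.cos θ : ℂ)) *
              ((Real.sin θ : ℂ)) ^ n) -
          ((d : ℝ) : ℂ) *
            ∫ θ in (0 : ℝ)..π, Complex.exp ((R ω : ℂ) * w ^ (1 / 2 : ℂ) * (Real.cos θ : ℂ)) *
              ((Real.sin θ : ℂ)) ^ (n - 2))‖ ≤ C := by
    filter_upwards [hbd] with ω hω
    obtain ⟨hr0, hrA⟩ := hω
    set r := R ω
    rw [norm_mul]
    have h1 : ‖Complex.exp (-(w + ((r : ℂ)) ^ 2) / 2)‖ ≤ Real.exp (M ^ 2 / 2) := by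
      rw [Complex.norm_exp]
      apply Real.exp_le_exp.mpr
      have : ((-(w + ((r : ℂ)) ^ 2) / 2)).re = -(w.re + r ^ 2) / 2 := by
        rw [show (2 : ℂ) = ((2 : ℝ) : ℂ) by norm_num, Complex.div_ofReal_re,
          show ((r : ℂ)) ^ 2 = ((r ^ 2 : ℝ) : ℂ) by push_cast; ring,
          Complex.neg_re, Complex.add_re, Complex.ofReal_re]
      rw [this]
      linarith [sq_nonneg r, hrew]
    have hI1 := hIbound r hr0 hrA n
    have hI2 := hIbound r hr0 hrA (n - 2)
    set I1 : ℂ := ∫ θ in (0 : ℝ)..π, Complex.exp ((r : ℂ) * w ^ (1 / 2 : ℂ) * (Real.cos θ : ℂ)) *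
        ((Real.sin θ : ℂ)) ^ n with hI1_def
    set I2 : ℂ := ∫ θ in (0 : ℝ)..π, Complex.exp ((r : ℂ) * w ^ (1 / 2 : ℂ) * (Real.cos θ : ℂ)) *
        ((Real.sin θ : ℂ)) ^ (n - 2) with hI2_def
    set E : ℝ := Real.exp (Real.sqrt 2 * M * A) * π with hE_def
    have hE : (0 : ℝ) ≤ E := by rw [hE_def]; positivity
    have hr2 : r ^ 2 ≤ A ^ 2 := pow_le_pow_left₀ hr0 hrA 2
    have h2 : ‖((r : ℂ)) ^ 2 * ((c : ℝ) : ℂ) * I1 - ((d : ℝ) : ℂ) * I2‖ ≤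
        (A ^ 2 * c + d) * E := by
      refine le_trans (norm_sub_le _ _) ?_
      have e1 : ‖((r : ℂ)) ^ 2 * ((c : ℝ) : ℂ) * I1‖ = r ^ 2 * c * ‖I1‖ := by
        rw [norm_mul, norm_mul, norm_pow, Complex.norm_real, Complex.norm_real,
          Real.norm_eq_abs, Real.norm_eq_abs, abs_of_nonneg hr0, abs_of_nonneg hc.le]
      have e2 : ‖((d : ℝ) : ℂ) * I2‖ = d * ‖I2‖ := by
        rw [norm_mul, Complex.norm_real, Real.norm_eq_abs, abs_of_nonneg hd.le]
      rw [e1, e2]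
      have ha : r ^ 2 * c * ‖I1‖ ≤ A ^ 2 * c * E :=
        mul_le_mul (mul_le_mul_of_nonneg_right hr2 hc.le) hI1 (norm_nonneg _) (by positivity)
      have hb2 : d * ‖I2‖ ≤ d * E := mul_le_mul_of_nonneg_left hI2 hd.le
      calc r ^ 2 * c * ‖I1‖ + d * ‖I2‖ ≤ A ^ 2 * c * E + d * E := add_le_add ha hb2
        _ = (A ^ 2 * c + d) * E := by ring
    rw [hC_def]
    exact mul_le_mul h1 h2 (norm_nonneg _) (Real.exp_pos _).le
  have hnorm : ‖∫ ω, Complex.exp (-(w + ((R ω : ℂ)) ^ 2) / 2) *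
        (((R ω : ℂ)) ^ 2 * ((c : ℝ) : ℂ) *
            (∫ θ in (0 : ℝ)..π, Complex.exp ((R ω : ℂ) * w ^ (1 / 2 : ℂ) * (Real.cos θ : ℂ)) *
              ((Real.sin θ : ℂ)) ^ n) -
          ((d : ℝ) : ℂ) *
            ∫ θ in (0 : ℝ)..π, Complex.exp ((R ω : ℂ) * w ^ (1 / 2 : ℂ) * (Real.cos θ : ℂ)) *
              ((Real.sin θ : ℂ)) ^ (n - 2)) ∂μ‖ ≤ C := by
    have := norm_integral_le_of_norm_le_const hae
    simpa [measure_univ] using this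
  have hGw : ‖G w‖ ≤ (1 / 2) * C := by
    rw [hG w, norm_mul]
    have h12 : ‖(1 / 2 : ℂ)‖ = 1 / 2 := by simp
    rw [h12]
    refine mul_le_mul_of_nonneg_left ?_ (by norm_num)
    exact hnorm
  refine le_trans hGw ?_
  -- final numeric comparison
  have hle : M ^ 2 / 2 + Real.sqrt 2 * M * A ≤ (A + Real.sqrt 2 * M) ^ 2 / 2 := by
    nlinarith [Real.sq_sqrt (by norm_num : (0:ℝ) ≤ 2), sq_nonneg A, sq_nonneg M,
      Real.sqrt_nonneg 2]
  have hK : (0 : ℝ) ≤ γ * (A ^ 2 / ((n : ℝ) - 1) + 1) := by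
    have hγpos : 0 < γ := by
      rw [hγ_def]; positivity
    have : (0 : ℝ) < (n : ℝ) - 1 := by linarith
    positivity
  calc (1 / 2 : ℝ) * C
      = γ * (A ^ 2 / ((n : ℝ) - 1) + 1) / 2 * Real.exp (M ^ 2 / 2 + Real.sqrt 2 * M * A) := by
        rw [hC_def, Real.exp_add, ← hkey]; ring
    _ ≤ γ * (A ^ 2 / ((n : ℝ) - 1) + 1) / 2 * Real.exp ((A + Real.sqrt 2 * M) ^ 2 / 2) := by
        apply mul_le_mul_of_nonneg_left (Real.exp_le_exp.mpr hle) (by linarith)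
    _ = γ / 2 * (A ^ 2 / ((n : ℝ) - 1) + 1) * Real.exp ((A + Real.sqrt 2 * M) ^ 2 / 2) := by
        ring
end

section
/- Let X be a real random variable with |X| ≤ A almost surely (A > 0), let f_Y(y) = (1/√(2π)) E[exp(−(y−X)²/2)], let λ ∈ [0, 1/2), and fix κ ∈ (0, 1/√(2π)]. Then e^{λy²} f_Y(y) − κ < 0 for every y with |y| > A/(1−2λ) + ( (1/(1−2λ)) log(1/(2πκ²)) + 2λA²/(1−2λ)² )^{1/2}, and the set {y ∈ ℝ : e^{λy²} f_Y(y) = κ} is finite. -/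
open MeasureTheory Real

section Aux

lemma aux_analytic {Ω : Type*} [MeasurableSpace Ω] (μ : Measure Ω) [IsProbabilityMeasure μ]
    (X : Ω → ℝ) (hX : Measurable X) (A : ℝ) (hbd : ∀ᵐ ω ∂μ, |X ω| ≤ A) (y : ℝ) :
    AnalyticAt ℝ (fun y : ℝ => ∫ ω, Real.exp (-(y - X ω) ^ 2 / 2) ∂μ) y := by
  set F : ℂ → ℂ := fun z => ∫ ω, Complex.exp (-(z - (X ω : ℂ)) ^ 2 / 2) ∂μ with hF
  have hmeas : ∀ z : ℂ, AEStronglyMeasurable (fun ω => Complex.exp (-(z - (X ω : ℂ)) ^ 2 / 2)) μ := by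
    intro z
    exact (Complex.measurable_exp.comp (by fun_prop)).aestronglyMeasurable
  have hnorm : ∀ (z : ℂ) (x : ℝ), ‖Complex.exp (-(z - (x : ℂ)) ^ 2 / 2)‖ ≤ Real.exp (‖z‖ ^ 2 / 2) := by
    intro z x
    rw [Complex.norm_exp, Real.exp_le_exp]
    have h1 : (-(z - (x : ℂ)) ^ 2 / 2).re = -((z.re - x) ^ 2 - z.im ^ 2) / 2 := by
      simp [Complex.div_re, Complex.normSq, pow_two, Complex.mul_re, Complex.mul_im]
      try ring
    rw [h1]
    have h2 : |z.im| ≤ ‖z‖ := Complex.abs_im_le_norm z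
    nlinarith [sq_nonneg (z.re - x), abs_nonneg z.im, norm_nonneg z, _root_.sq_abs z.im]
  have hint : ∀ z : ℂ, Integrable (fun ω => Complex.exp (-(z - (X ω : ℂ)) ^ 2 / 2)) μ := by
    intro z
    exact (integrable_const (Real.exp (‖z‖ ^ 2 / 2))).mono' (hmeas z)
      (Filter.Eventually.of_forall fun ω => hnorm z (X ω))
  have hdiff : Differentiable ℂ F := by
    intro z₀
    set F' : ℂ → Ω → ℂ := fun z ω => -(z - (X ω : ℂ)) * Complex.exp (-(z - (X ω : ℂ)) ^ 2 / 2) with hF'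
    have key := hasDerivAt_integral_of_dominated_loc_of_deriv_le (μ := μ) (x₀ := z₀)
      (F := fun z ω => Complex.exp (-(z - (X ω : ℂ)) ^ 2 / 2)) (F' := F')
      (bound := fun _ => (‖z₀‖ + 1 + |A|) * Real.exp ((‖z₀‖ + 1) ^ 2 / 2))
      (Metric.ball_mem_nhds z₀ one_pos) (Filter.Eventually.of_forall fun z => hmeas z) (hint z₀)
      (by
        apply AEStronglyMeasurable.mul _ (hmeas z₀)
        exact ((measurable_const.sub (Complex.measurable_ofReal.comp hX)).neg).aestronglyMeasurable)
      (by
        filter_upwards [hbd] with ω hω z hz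
        rw [Metric.mem_ball] at hz
        have hz1 : ‖z‖ ≤ ‖z₀‖ + 1 := by
          have := norm_sub_norm_le z z₀
          rw [← dist_eq_norm] at this
          linarith [dist_comm z z₀ ▸ hz.le]
        rw [norm_mul]
        have h1 : ‖-(z - (X ω : ℂ))‖ ≤ ‖z₀‖ + 1 + |A| := by
          rw [norm_neg]
          calc ‖z - (X ω : ℂ)‖ ≤ ‖z‖ + ‖(X ω : ℂ)‖ := norm_sub_le _ _
            _ ≤ ‖z₀‖ + 1 + |A| := by
                rw [Complex.norm_real, Real.norm_eq_abs]
                have : |X ω| ≤ |A| := le_trans hω (le_abs_self A)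
                linarith
        have h2 : ‖Complex.exp (-(z - ((X ω : ℝ) : ℂ)) ^ 2 / 2)‖ ≤ Real.exp ((‖z₀‖ + 1) ^ 2 / 2) := by
          refine le_trans (hnorm z (X ω)) ?_
          rw [Real.exp_le_exp]
          have : 0 ≤ ‖z‖ := norm_nonneg z
          nlinarith [norm_nonneg z₀]
        calc ‖-(z - (X ω : ℂ))‖ * ‖Complex.exp (-(z - ((X ω : ℝ) : ℂ)) ^ 2 / 2)‖
            ≤ (‖z₀‖ + 1 + |A|) * Real.exp ((‖z₀‖ + 1) ^ 2 / 2) := by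
              apply mul_le_mul h1 h2 (norm_nonneg _) (by positivity))
      (integrable_const _)
      (by
        apply Filter.Eventually.of_forall
        intro ω z hz
        have h0 : HasDerivAt (fun z : ℂ => -(z - (X ω : ℂ)) ^ 2 / 2) (-(z - (X ω : ℂ))) z := by
          have h1 : HasDerivAt (fun z : ℂ => z - (X ω : ℂ)) 1 z := (hasDerivAt_id z).sub_const _
          have h2 : HasDerivAt (fun z : ℂ => -(z - (X ω : ℂ)) ^ 2 / 2) (-((2 : ℕ) * (z - (X ω : ℂ)) ^ (2 - 1) * 1) / 2) z :=
            (h1.pow 2).neg.div_const 2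
          convert h2 using 1
          ring
        have := h0.cexp
        exact this.congr_deriv (by rw [hF']; ring))
    exact key.2.differentiableAt
  have hre : ∀ y : ℝ, (F (y : ℂ)).re = ∫ ω, Real.exp (-(y - X ω) ^ 2 / 2) ∂μ := by
    intro y
    calc (F (y : ℂ)).re = RCLike.re (∫ ω, Complex.exp (-((y : ℂ) - (X ω : ℂ)) ^ 2 / 2) ∂μ) := by
          simp [hF, RCLike.re_to_complex]
      _ = ∫ ω, RCLike.re (Complex.exp (-((y : ℂ) - (X ω : ℂ)) ^ 2 / 2)) ∂μ :=
          (integral_re (hint ((y : ℝ) : ℂ))).symm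
      _ = ∫ ω, Real.exp (-(y - X ω) ^ 2 / 2) ∂μ := by
          congr 1
          funext ω
          have h : -((y : ℂ) - (X ω : ℂ)) ^ 2 / 2 = ((-(y - X ω) ^ 2 / 2 : ℝ) : ℂ) := by
            push_cast; ring
          rw [h]
          exact Complex.exp_ofReal_re _
  have hgoal : AnalyticAt ℝ (fun y : ℝ => (F ((y : ℝ) : ℂ)).re) y := by
    have h1 : AnalyticAt ℂ F ((y : ℝ) : ℂ) := hdiff.analyticAt _
    have h2 : AnalyticAt ℝ F ((y : ℝ) : ℂ) := h1.restrictScalars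
    have h3 : AnalyticAt ℝ (fun y : ℝ => F ((y : ℝ) : ℂ)) y :=
      h2.comp (Complex.ofRealCLM.analyticAt y)
    exact (Complex.reCLM.analyticAt _).comp h3
  have : (fun y : ℝ => ∫ ω, Real.exp (-(y - X ω) ^ 2 / 2) ∂μ) = fun y : ℝ => (F ((y : ℝ) : ℂ)).re := by
    funext y; rw [hre]
  rw [this]
  exact hgoal

end Aux

set_option maxHeartbeats 1000000 in
theorem stmt_15 {Ω : Type*} [MeasurableSpace Ω] (μ : Measure Ω) [IsProbabilityMeasure μ]
    (X : Ω → ℝ) (hXmeas : Measurable X) (A : ℝ) (hA : 0 < A)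
    (hbd : ∀ᵐ ω ∂μ, |X ω| ≤ A)
    (fY : ℝ → ℝ)
    (hfY : ∀ y : ℝ, fY y = (1 / Real.sqrt (2 * π)) * ∫ ω, Real.exp (-(y - X ω) ^ 2 / 2) ∂μ)
    (lam : ℝ) (hlam : lam ∈ Set.Ico 0 (1 / 2 : ℝ))
    (κ : ℝ) (hκ : κ ∈ Set.Ioc 0 (1 / Real.sqrt (2 * π))) :
    (∀ y : ℝ,
      A / (1 - 2 * lam) +
        Real.sqrt ((1 / (1 - 2 * lam)) * Real.log (1 / (2 * π * κ ^ 2)) +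
          2 * lam * A ^ 2 / (1 - 2 * lam) ^ 2) < |y| →
      Real.exp (lam * y ^ 2) * fY y - κ < 0) ∧
    {y : ℝ | Real.exp (lam * y ^ 2) * fY y = κ}.Finite := by
  obtain ⟨hlam0, hlam2⟩ := hlam
  obtain ⟨hκ0, hκ1⟩ := hκ
  have hπ : (0 : ℝ) < 2 * π := by positivity
  have hsqπ : (0 : ℝ) < Real.sqrt (2 * π) := Real.sqrt_pos.mpr hπ
  have hsq2 : Real.sqrt (2 * π) ^ 2 = 2 * π := Real.sq_sqrt hπ.le
  set c : ℝ := 1 - 2 * lam with hc_def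
  have hc : 0 < c := by simp only [hc_def]; linarith
  have hc1 : c ≤ 1 := by simp only [hc_def]; linarith
  set R : ℝ := (1 / c) * Real.log (1 / (2 * π * κ ^ 2)) + 2 * lam * A ^ 2 / c ^ 2 with hR_def
  have hκsq : 2 * π * κ ^ 2 ≤ 1 := by
    have h5 : κ * Real.sqrt (2 * π) ≤ 1 := by
      rw [← le_div_iff₀ hsqπ]; exact hκ1
    nlinarith [mul_pos hκ0 hsqπ]
  have hlog0 : 0 ≤ Real.log (1 / (2 * π * κ ^ 2)) := by
    apply Real.log_nonneg
    rw [le_div_iff₀ (by positivity)]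
    linarith
  have hR0 : 0 ≤ R := by
    apply add_nonneg
    · exact mul_nonneg (by positivity) hlog0
    · positivity
  have hIint : ∀ y : ℝ, Integrable (fun ω => Real.exp (-(y - X ω) ^ 2 / 2)) μ := by
    intro y
    refine (integrable_const (1 : ℝ)).mono' ?_ ?_
    · exact (Real.measurable_exp.comp (by fun_prop)).aestronglyMeasurable
    · refine Filter.Eventually.of_forall fun ω => ?_
      rw [Real.norm_eq_abs, Real.abs_exp]
      apply Real.exp_le_one_iff.mpr
      nlinarith [sq_nonneg (y - X ω)]
  -- Part 1
  have key : ∀ y : ℝ, A / c + Real.sqrt R < |y| →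
      Real.exp (lam * y ^ 2) * fY y - κ < 0 := by
    intro y hy
    set t : ℝ := |y| with ht_def
    have ht0 : 0 ≤ t := abs_nonneg y
    have hAc : A ≤ A / c := by
      rw [le_div_iff₀ hc]; nlinarith
    have htA : A ≤ t := by
      have := Real.sqrt_nonneg R
      linarith
    -- exponent inequality
    have h1 : R < (t - A / c) ^ 2 := by
      have h2 : Real.sqrt R < t - A / c := by linarith
      have h3 : Real.sqrt R ^ 2 < (t - A / c) ^ 2 := by
        apply sq_lt_sq' <;> nlinarith [Real.sqrt_nonneg R]
      rw [Real.sq_sqrt hR0] at h3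
      exact h3
    have hE : lam * t ^ 2 - (t - A) ^ 2 / 2 < Real.log (Real.sqrt (2 * π) * κ) := by
      have hlogid : Real.log (1 / (2 * π * κ ^ 2)) = -(2 * Real.log (Real.sqrt (2 * π) * κ)) := by
        rw [one_div, Real.log_inv]
        congr 1
        have h3 : 2 * π * κ ^ 2 = (Real.sqrt (2 * π) * κ) ^ 2 := by
          rw [mul_pow, hsq2]
        rw [h3, Real.log_pow]
        push_cast; ring
      have e1 : lam * t ^ 2 - (t - A) ^ 2 / 2 = -(c / 2) * (t - A / c) ^ 2 + lam * A ^ 2 / c := by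
        field_simp
        ring
      have e2 : (c / 2) * R = -(Real.log (Real.sqrt (2 * π) * κ)) + lam * A ^ 2 / c := by
        rw [hR_def, hlogid]
        field_simp
      nlinarith
    -- integral bound
    have hIle : (∫ ω, Real.exp (-(y - X ω) ^ 2 / 2) ∂μ) ≤ Real.exp (-(t - A) ^ 2 / 2) := by
      have hpt : ∀ᵐ ω ∂μ, Real.exp (-(y - X ω) ^ 2 / 2) ≤ Real.exp (-(t - A) ^ 2 / 2) := by
        filter_upwards [hbd] with ω hω
        rw [Real.exp_le_exp]
        have h4 : t - A ≤ |y - X ω| := by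
          have := abs_sub_abs_le_abs_sub y (X ω)
          linarith
        have h5 : (t - A) ^ 2 ≤ (y - X ω) ^ 2 := by
          rw [← sq_abs (y - X ω)]
          exact pow_le_pow_left₀ (by linarith) h4 2
        linarith
      calc (∫ ω, Real.exp (-(y - X ω) ^ 2 / 2) ∂μ)
          ≤ ∫ _, Real.exp (-(t - A) ^ 2 / 2) ∂μ := integral_mono_ae (hIint y) (integrable_const _) hpt
        _ = Real.exp (-(t - A) ^ 2 / 2) := by simp
    have hInn : (0 : ℝ) ≤ ∫ ω, Real.exp (-(y - X ω) ^ 2 / 2) ∂μ :=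
      integral_nonneg fun ω => (Real.exp_pos _).le
    have hylt : Real.exp (lam * y ^ 2) * fY y < κ := by
      rw [hfY y]
      have hyt : y ^ 2 = t ^ 2 := (sq_abs y).symm
      calc Real.exp (lam * y ^ 2) * (1 / Real.sqrt (2 * π) * ∫ ω, Real.exp (-(y - X ω) ^ 2 / 2) ∂μ)
          ≤ Real.exp (lam * t ^ 2) * (1 / Real.sqrt (2 * π) * Real.exp (-(t - A) ^ 2 / 2)) := by
            rw [hyt]
            apply mul_le_mul_of_nonneg_left _ (Real.exp_pos _).le
            apply mul_le_mul_of_nonneg_left hIle (by positivity)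
        _ = (1 / Real.sqrt (2 * π)) * Real.exp (lam * t ^ 2 - (t - A) ^ 2 / 2) := by
            rw [show lam * t ^ 2 - (t - A) ^ 2 / 2 = lam * t ^ 2 + -((t - A) ^ 2 / 2) from by ring,
              Real.exp_add]
            ring
        _ < (1 / Real.sqrt (2 * π)) * (Real.sqrt (2 * π) * κ) := by
            apply mul_lt_mul_of_pos_left _ (by positivity)
            calc Real.exp (lam * t ^ 2 - (t - A) ^ 2 / 2)
                < Real.exp (Real.log (Real.sqrt (2 * π) * κ)) := Real.exp_lt_exp.mpr hE
              _ = Real.sqrt (2 * π) * κ := Real.exp_log (by positivity)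
        _ = κ := by field_simp
    linarith
  refine ⟨key, ?_⟩
  -- Part 2: finiteness
  set G : ℝ → ℝ := fun y => Real.exp (lam * y ^ 2) * fY y - κ with hG_def
  have hGan : ∀ y : ℝ, AnalyticAt ℝ G y := by
    intro y
    have h1 : AnalyticAt ℝ (fun y : ℝ => ∫ ω, Real.exp (-(y - X ω) ^ 2 / 2) ∂μ) y :=
      aux_analytic μ X hXmeas A hbd y
    have h2 : AnalyticAt ℝ (fun y : ℝ => Real.exp (lam * y ^ 2)) y := by
      exact (analyticAt_const.mul (analyticAt_id.pow 2)).rexp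
    have h3 : AnalyticAt ℝ (fun y : ℝ =>
        Real.exp (lam * y ^ 2) * ((1 / Real.sqrt (2 * π)) * ∫ ω, Real.exp (-(y - X ω) ^ 2 / 2) ∂μ) - κ) y :=
      (h2.mul (analyticAt_const.mul h1)).sub analyticAt_const
    have h4 : G = fun y : ℝ =>
        Real.exp (lam * y ^ 2) * ((1 / Real.sqrt (2 * π)) * ∫ ω, Real.exp (-(y - X ω) ^ 2 / 2) ∂μ) - κ := by
      funext z; rw [hG_def]; simp only []; rw [hfY z]
    rw [h4]
    exact h3
  have hGcont : Continuous G :=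
    continuous_iff_continuousAt.mpr fun y => (hGan y).continuousAt
  set M : ℝ := A / c + Real.sqrt R with hM_def
  have hM0 : 0 < M := by
    have := Real.sqrt_nonneg R
    have : 0 < A / c := by positivity
    simp only [hM_def]
    positivity
  set Z : Set ℝ := {y : ℝ | Real.exp (lam * y ^ 2) * fY y = κ} with hZ_def
  have hZG : Z = {y : ℝ | G y = 0} := by
    ext y; simp only [hZ_def, hG_def, Set.mem_setOf_eq, sub_eq_zero]
  have hZsub : Z ⊆ Set.Icc (-M) M := by
    intro y hy
    rw [Set.mem_Icc, ← abs_le]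
    by_contra h
    push_neg at h
    have := key y h
    rw [hZ_def, Set.mem_setOf_eq] at hy
    rw [hy] at this
    linarith
  have hZclosed : IsClosed Z := by
    rw [hZG]
    exact isClosed_eq hGcont continuous_const
  have hZcompact : IsCompact Z :=
    (isCompact_Icc (a := -M) (b := M)).of_isClosed_subset hZclosed hZsub
  have hGnot : G (M + 1) ≠ 0 := by
    have h : M < |M + 1| := by
      rw [abs_of_pos (by linarith)]; linarith
    have := key (M + 1) h
    simp only [hG_def]
    linarith
  have hdis : DiscreteTopology Z := by
    rw [discreteTopology_subtype_iff]
    intro z hz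
    rcases (hGan z).eventually_eq_zero_or_eventually_ne_zero with hcase | hcase
    · exfalso
      have hzero : Set.EqOn G 0 Set.univ := by
        apply AnalyticOnNhd.eqOn_zero_of_preconnected_of_eventuallyEq_zero
          (fun y _ => hGan y) isPreconnected_univ (Set.mem_univ z)
        exact hcase
      exact hGnot (hzero (Set.mem_univ (M + 1)))
    · rw [← Filter.empty_mem_iff_bot]
      have h1 : {w : ℝ | G w ≠ 0} ∈ nhdsWithin z {z}ᶜ ⊓ Filter.principal Z :=
        Filter.mem_inf_of_left hcase
      have h2 : Z ∈ nhdsWithin z {z}ᶜ ⊓ Filter.principal Z :=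
        Filter.mem_inf_of_right (Filter.mem_principal_self Z)
      have h3 := Filter.inter_mem h1 h2
      have h4 : {w : ℝ | G w ≠ 0} ∩ Z = ∅ := by
        rw [Set.eq_empty_iff_forall_notMem]
        rintro w ⟨hw1, hw2⟩
        rw [hZG, Set.mem_setOf_eq] at hw2
        exact hw1 hw2
      rw [← h4]
      exact h3
  exact hZcompact.finite ⟨hdis⟩
end
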